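/- arXiv:2502.01875 — 7 statements merged into one kernel-verified Lean document; each statement's English description precedes it below -/
import Mathlib

section
/- Let y and z be nonzero complex numbers with z + 1/z ≠ y + 1/y, and suppose y is not an integer power of q (so that (qy, q/y; q)_n ≠ 0 for all n). Then ∑_{n=0}^{∞} q^n (z, z^{-1}; q)_n / (qy, q/y; q)_n = C(z,y) · ( (1−y)(1−y^{-1}) − (z, z^{-1}; q)_∞ / (qy, q/y; q)_∞ ). -/
/-- Finite q-Pochhammer symbol `(a; q)_n = ∏_{j=0}^{n-1} (1 - a q^j)`. -/
noncomputable def qPoch (q a : ℂ) (n : ℕ) : ℂ := ∏ j ∈ Finset.range n, (1 - a * q ^ j)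

/-- Infinite q-Pochhammer symbol `(a; q)_∞ = ∏_{j=0}^{∞} (1 - a q^j)`. -/
noncomputable def qPochInf (q a : ℂ) : ℂ := ∏' j : ℕ, (1 - a * q ^ j)

/-- `C(z,y) = 1/(z + 1/z - y - 1/y)`. -/
noncomputable def Ccoef (z y : ℂ) : ℂ := (z + z⁻¹ - y - y⁻¹)⁻¹

open Filter Topology

private lemma summable_log_aux (q a : ℂ) (hq : ‖q‖ < 1) :
    Summable (fun n : ℕ => Complex.log (1 - a * q ^ n)) := by
  have hg : Summable (fun n : ℕ => 3/2 * (‖a‖ * ‖q‖ ^ n)) :=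
    (summable_geometric_of_lt_one (norm_nonneg q) hq).mul_left _ |>.mul_left _
  refine Summable.of_norm_bounded_eventually_nat hg ?_
  have h0 : Tendsto (fun n : ℕ => ‖a * q ^ n‖) atTop (𝓝 0) := by
    simpa using ((tendsto_pow_atTop_nhds_zero_of_norm_lt_one hq).const_mul a).norm
  filter_upwards [h0.eventually_le_const (by norm_num : (0:ℝ) < 1/2)] with n hn
  have := Complex.norm_log_one_add_half_le_self (z := -(a * q ^ n)) (by simpa using hn)
  simp only [norm_neg, norm_mul, norm_pow] at this ⊢
  rwa [sub_eq_add_neg]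

private lemma hasProd_qPochInf (q a : ℂ) (hq : ‖q‖ < 1) :
    HasProd (fun n : ℕ => 1 - a * q ^ n) (qPochInf q a) := by
  by_cases h : ∀ n : ℕ, 1 - a * q ^ n ≠ 0
  · exact (Complex.multipliable_of_summable_log (summable_log_aux q a hq)).hasProd
  · push_neg at h
    obtain ⟨n0, h0⟩ := h
    have hev : ∀ᶠ s : Finset ℕ in atTop, (0:ℂ) = ∏ i ∈ s, (1 - a * q ^ i) := by
      filter_upwards [Filter.eventually_ge_atTop ({n0} : Finset ℕ)] with s hs
      exact (Finset.prod_eq_zero (hs (Finset.mem_singleton_self n0)) h0).symm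
    have h0' : HasProd (fun n : ℕ => 1 - a * q ^ n) 0 := tendsto_const_nhds.congr' hev
    rw [qPochInf, h0'.tprod_eq]
    exact h0'

private lemma tendsto_qPoch (q a : ℂ) (hq : ‖q‖ < 1) :
    Tendsto (fun n => qPoch q a n) atTop (𝓝 (qPochInf q a)) := by
  simpa [qPoch] using (hasProd_qPochInf q a hq).tendsto_prod_nat

private lemma qPochInf_ne_zero (q a : ℂ) (hq : ‖q‖ < 1) (h : ∀ n : ℕ, 1 - a * q ^ n ≠ 0) :
    qPochInf q a ≠ 0 := by
  have := Complex.cexp_tsum_eq_tprod (f := fun n : ℕ => 1 - a * q ^ n) h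
    (summable_log_aux q a hq)
  rw [qPochInf, ← this]
  exact Complex.exp_ne_zero _

private lemma key_telescope (q y z : ℂ) (n : ℕ)
    (h1 : qPoch q (q*y) n ≠ 0) (h2 : qPoch q (q*y⁻¹) n ≠ 0)
    (h3 : (1 - (q*y) * q ^ n) ≠ 0) (h4 : (1 - (q*y⁻¹) * q ^ n) ≠ 0)
    (hy : y ≠ 0) (hz : z ≠ 0) :
    (1 - y*q^n) * (1 - y⁻¹*q^n) * (qPoch q z n * qPoch q z⁻¹ n) /
        (qPoch q (q*y) n * qPoch q (q*y⁻¹) n)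
      - (1 - y*q^(n+1)) * (1 - y⁻¹*q^(n+1)) * (qPoch q z (n+1) * qPoch q z⁻¹ (n+1)) /
        (qPoch q (q*y) (n+1) * qPoch q (q*y⁻¹) (n+1))
      = (z + z⁻¹ - y - y⁻¹) * (q^n * (qPoch q z n * qPoch q z⁻¹ n) /
        (qPoch q (q*y) n * qPoch q (q*y⁻¹) n)) := by
  have e : ∀ a : ℂ, qPoch q a (n+1) = qPoch q a n * (1 - a * q ^ n) := fun a =>
    Finset.prod_range_succ _ _
  have hA : (1 - y*q^(n+1)) * (1 - y⁻¹*q^(n+1)) = (1 - (q*y)*q^n) * (1 - (q*y⁻¹)*q^n) := by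
    ring
  rw [e, e, e, e, hA]
  set Pz := qPoch q z n
  set Pzi := qPoch q z⁻¹ n
  set Qy := qPoch q (q*y) n
  set Qyi := qPoch q (q*y⁻¹) n
  set u := 1 - (q*y)*q^n with hu
  set v := 1 - (q*y⁻¹)*q^n with hv
  have step1 : u * v * (Pz * (1 - z*q^n) * (Pzi * (1 - z⁻¹*q^n))) /
      (Qy * u * (Qyi * v)) = (1 - z*q^n) * (1 - z⁻¹*q^n) * (Pz * Pzi) / (Qy * Qyi) := by
    field_simp
  rw [step1, div_sub_div_same, ← mul_div_assoc]
  congr 1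
  have hsub : (1 - y*q^n) * (1 - y⁻¹*q^n) - (1 - z*q^n) * (1 - z⁻¹*q^n)
      = q^n * (z + z⁻¹ - y - y⁻¹) := by
    field_simp
    ring
  linear_combination (Pz * Pzi) * hsub

theorem sum_single_eq_C_mul
    (q y z : ℂ) (hq : ‖q‖ < 1) (hy : y ≠ 0) (hz : z ≠ 0)
    (hyz : z + z⁻¹ ≠ y + y⁻¹) (hypow : ∀ n : ℤ, y ≠ q ^ n) :
    ∑' n : ℕ, q ^ n * (qPoch q z n * qPoch q z⁻¹ n) /
        (qPoch q (q * y) n * qPoch q (q * y⁻¹) n)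
      = Ccoef z y * ((1 - y) * (1 - y⁻¹) -
          (qPochInf q z * qPochInf q z⁻¹) /
            (qPochInf q (q * y) * qPochInf q (q * y⁻¹))) := by
  have hq' : ‖q‖ < 1 := hq
  -- the denominator factors never vanish
  have hfy : ∀ j : ℕ, (1 : ℂ) - (q * y) * q ^ j ≠ 0 := by
    intro j h
    rcases eq_or_ne q 0 with rfl | hq0
    · simp at h
    · apply hypow (-(j + 1 : ℕ) : ℤ)
      have h1 : y * q ^ (j + 1) = 1 := by
        rw [pow_succ']
        linear_combination -h
      have hqj : (q : ℂ) ^ (j + 1) ≠ 0 := pow_ne_zero _ hq0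
      have hinv : y = ((q : ℂ) ^ (j + 1))⁻¹ := by
        field_simp
        linear_combination h1
      rw [zpow_neg, zpow_natCast]
      exact hinv
  have hfyi : ∀ j : ℕ, (1 : ℂ) - (q * y⁻¹) * q ^ j ≠ 0 := by
    intro j h
    rcases eq_or_ne q 0 with rfl | hq0
    · simp [hy] at h
    · apply hypow ((j + 1 : ℕ) : ℤ)
      have h1 : y⁻¹ * q ^ (j + 1) = 1 := by
        rw [pow_succ']
        linear_combination -h
      rw [zpow_natCast]
      field_simp at h1
      exact h1.symm
  have hQy : ∀ n, qPoch q (q * y) n ≠ 0 := fun n =>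
    Finset.prod_ne_zero_iff.mpr fun j _ => hfy j
  have hQyi : ∀ n, qPoch q (q * y⁻¹) n ≠ 0 := fun n =>
    Finset.prod_ne_zero_iff.mpr fun j _ => hfyi j
  have hQ : ∀ n, qPoch q (q * y) n * qPoch q (q * y⁻¹) n ≠ 0 := fun n =>
    mul_ne_zero (hQy n) (hQyi n)
  -- abbreviations
  set f : ℕ → ℂ := fun n => q ^ n * (qPoch q z n * qPoch q z⁻¹ n) /
      (qPoch q (q * y) n * qPoch q (q * y⁻¹) n) with hf
  set b : ℕ → ℂ := fun n => (1 - y * q ^ n) * (1 - y⁻¹ * q ^ n) *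
      (qPoch q z n * qPoch q z⁻¹ n) / (qPoch q (q * y) n * qPoch q (q * y⁻¹) n) with hb
  have hK : z + z⁻¹ - y - y⁻¹ ≠ 0 := by
    intro h
    exact hyz (by linear_combination h)
  -- partial sums telescope
  have hstep : ∀ n, b n - b (n + 1) = (z + z⁻¹ - y - y⁻¹) * f n := fun n =>
    key_telescope q y z n (hQy n) (hQyi n) (hfy n) (hfyi n) hy hz
  have hpartial : ∀ N, ∑ n ∈ Finset.range N, f n = Ccoef z y * (b 0 - b N) := by
    intro N
    induction N with
    | zero => simp
    | succ N ih =>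
        rw [Finset.sum_range_succ, ih]
        have h2 : Ccoef z y * (b N - b (N + 1)) = f N := by
          rw [hstep N, Ccoef, ← mul_assoc, inv_mul_cancel₀ hK, one_mul]
        linear_combination -h2
  -- limits
  have hq0 : Tendsto (fun n : ℕ => q ^ n) atTop (𝓝 0) :=
    tendsto_pow_atTop_nhds_zero_of_norm_lt_one hq'
  have t1 : Tendsto (fun n : ℕ => 1 - y * q ^ n) atTop (𝓝 1) := by
    simpa using tendsto_const_nhds.sub (hq0.const_mul y)
  have t2 : Tendsto (fun n : ℕ => 1 - y⁻¹ * q ^ n) atTop (𝓝 1) := by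
    simpa using tendsto_const_nhds.sub (hq0.const_mul y⁻¹)
  have tP : Tendsto (fun n => qPoch q z n * qPoch q z⁻¹ n) atTop
      (𝓝 (qPochInf q z * qPochInf q z⁻¹)) :=
    (tendsto_qPoch q z hq').mul (tendsto_qPoch q z⁻¹ hq')
  have tQ : Tendsto (fun n => qPoch q (q * y) n * qPoch q (q * y⁻¹) n) atTop
      (𝓝 (qPochInf q (q * y) * qPochInf q (q * y⁻¹))) :=
    (tendsto_qPoch q (q * y) hq').mul (tendsto_qPoch q (q * y⁻¹) hq')
  have hQinf : qPochInf q (q * y) * qPochInf q (q * y⁻¹) ≠ 0 :=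
    mul_ne_zero (qPochInf_ne_zero _ _ hq' hfy) (qPochInf_ne_zero _ _ hq' hfyi)
  set A : ℂ := (qPochInf q z * qPochInf q z⁻¹) /
      (qPochInf q (q * y) * qPochInf q (q * y⁻¹)) with hA
  have hblim : Tendsto b atTop (𝓝 A) := by
    have := ((t1.mul t2).mul tP).div tQ hQinf
    rw [show A = 1 * 1 * (qPochInf q z * qPochInf q z⁻¹) /
        (qPochInf q (q * y) * qPochInf q (q * y⁻¹)) by simp [hA]]
    exact this
  -- summability
  have tg : Tendsto (fun n => (qPoch q z n * qPoch q z⁻¹ n) /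
      (qPoch q (q * y) n * qPoch q (q * y⁻¹) n)) atTop (𝓝 A) := tP.div tQ hQinf
  have hbound : ∀ᶠ n in atTop, ‖f n‖ ≤ (‖A‖ + 1) * ‖q‖ ^ n := by
    filter_upwards [tg.norm.eventually_le_const (lt_add_one ‖A‖)] with n hn
    have : f n = q ^ n * ((qPoch q z n * qPoch q z⁻¹ n) /
        (qPoch q (q * y) n * qPoch q (q * y⁻¹) n)) := by
      rw [hf]
      ring
    rw [this, norm_mul, norm_pow]
    calc ‖q‖ ^ n * ‖(qPoch q z n * qPoch q z⁻¹ n) /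
          (qPoch q (q * y) n * qPoch q (q * y⁻¹) n)‖
        ≤ ‖q‖ ^ n * (‖A‖ + 1) := by
          exact mul_le_mul_of_nonneg_left hn (pow_nonneg (norm_nonneg q) n)
      _ = (‖A‖ + 1) * ‖q‖ ^ n := by ring
  have hsummable : Summable f :=
    Summable.of_norm_bounded_eventually_nat
      ((summable_geometric_of_lt_one (norm_nonneg q) hq').mul_left _) hbound
  have hS : Tendsto (fun N => ∑ n ∈ Finset.range N, f n) atTop (𝓝 (∑' n, f n)) :=
    hsummable.hasSum.tendsto_sum_nat
  have hS2 : Tendsto (fun N => ∑ n ∈ Finset.range N, f n) atTop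
      (𝓝 (Ccoef z y * (b 0 - A))) := by
    have heq : (fun N => ∑ n ∈ Finset.range N, f n)
        = fun N => Ccoef z y * (b 0 - b N) := funext hpartial
    rw [heq]
    exact (tendsto_const_nhds.sub hblim).const_mul _
  have hfinal := tendsto_nhds_unique hS hS2
  rw [hfinal]
  have hb0 : b 0 = (1 - y) * (1 - y⁻¹) := by
    simp [hb, qPoch]
  rw [hb0]
end

section
/- For every complex number q with |q| < 1, ∑_{n≥1} q^n (q^n; q)_∞ (−q^{n+1}; q)_∞^2 (q^3; q^3)_{n−1} = (q^2; q^2)_∞ / (q; q^2)_∞ − (q^3; q^3)_∞. -/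
open Complex Filter Finset Topology

section Helpers

variable {Q a : ℂ} {r : ℝ}

lemma hp_factor_ne (hr : r < 1) (ha : ‖a‖ ≤ r) (hQ : ‖Q‖ ≤ r) (j : ℕ) :
    1 - a * Q ^ j ≠ 0 := by
  have h0 : (0:ℝ) ≤ r := le_trans (norm_nonneg a) ha
  have h1 : ‖a * Q ^ j‖ < 1 := by
    calc ‖a * Q ^ j‖ = ‖a‖ * ‖Q‖ ^ j := by rw [norm_mul, norm_pow]
    _ ≤ r * 1 := by
        gcongr
        exact pow_le_one₀ (norm_nonneg _) (hQ.trans hr.le)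
    _ < 1 := by simpa using hr
  intro h
  have : a * Q ^ j = 1 := by
    have := sub_eq_zero.mp h
    exact this.symm
  rw [this] at h1
  simp at h1

lemma hp_log_bound (hr : r < 1) (ha : ‖a‖ ≤ r) (hQ : ‖Q‖ ≤ r) (j : ℕ) :
    ‖Complex.log (1 - a * Q ^ j)‖ ≤ (r * (1 - r)⁻¹ / 2 + 1) * (‖a‖ * ‖Q‖ ^ j) := by
  have h0 : (0:ℝ) ≤ r := le_trans (norm_nonneg a) ha
  have hzn : ‖-(a * Q ^ j)‖ = ‖a‖ * ‖Q‖ ^ j := by rw [norm_neg, norm_mul, norm_pow]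
  have hz1 : ‖a‖ * ‖Q‖ ^ j ≤ r := by
    calc ‖a‖ * ‖Q‖ ^ j ≤ r * 1 := by
          gcongr
          exact pow_le_one₀ (norm_nonneg _) (hQ.trans hr.le)
    _ = r := mul_one r
  have hlt : ‖-(a * Q ^ j)‖ < 1 := by rw [hzn]; exact hz1.trans_lt hr
  have hb := Complex.norm_log_one_add_le hlt
  rw [show (1 : ℂ) + -(a * Q ^ j) = 1 - a * Q ^ j by ring] at hb
  rw [hzn] at hb
  refine hb.trans ?_
  set X := ‖a‖ * ‖Q‖ ^ j with hX
  have hXnn : 0 ≤ X := by positivity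
  have h1 : X ^ 2 ≤ r * X := by nlinarith
  have h2 : (1 - X)⁻¹ ≤ (1 - r)⁻¹ := by
    apply inv_anti₀ <;> linarith
  have h3 : (0:ℝ) ≤ (1 - X)⁻¹ := by
    apply inv_nonneg.mpr; linarith
  have h4 : X ^ 2 * (1 - X)⁻¹ ≤ (r * X) * (1 - r)⁻¹ :=
    mul_le_mul h1 h2 h3 (by positivity)
  nlinarith

lemma hp_summable_log (hr : r < 1) (ha : ‖a‖ ≤ r) (hQ : ‖Q‖ ≤ r) :
    Summable (fun j : ℕ => Complex.log (1 - a * Q ^ j)) := by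
  have h0 : (0:ℝ) ≤ r := le_trans (norm_nonneg a) ha
  refine Summable.of_norm_bounded
    (g := fun j => ((r * (1 - r)⁻¹ / 2 + 1) * ‖a‖) * ‖Q‖ ^ j) ?_ ?_
  · exact (summable_geometric_of_lt_one (norm_nonneg Q) (hQ.trans_lt hr)).mul_left _
  · intro j
    have := hp_log_bound hr ha hQ j
    calc ‖Complex.log (1 - a * Q ^ j)‖
        ≤ (r * (1 - r)⁻¹ / 2 + 1) * (‖a‖ * ‖Q‖ ^ j) := this
    _ = ((r * (1 - r)⁻¹ / 2 + 1) * ‖a‖) * ‖Q‖ ^ j := by ring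

lemma hp_exp_form (hr : r < 1) (ha : ‖a‖ ≤ r) (hQ : ‖Q‖ ≤ r) :
    qPochInf Q a = Complex.exp (∑' j : ℕ, Complex.log (1 - a * Q ^ j)) := by
  have := Complex.cexp_tsum_eq_tprod (f := fun j => 1 - a * Q ^ j)
    (fun j => hp_factor_ne hr ha hQ j)
    (hp_summable_log hr ha hQ)
  simpa [Function.comp, qPochInf] using this.symm

lemma hp_multipliable (hr : r < 1) (ha : ‖a‖ ≤ r) (hQ : ‖Q‖ ≤ r) :
    Multipliable (fun j : ℕ => 1 - a * Q ^ j) :=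
  Complex.multipliable_of_summable_log (f := fun j => 1 - a * Q ^ j)
    (hp_summable_log hr ha hQ)

lemma hp_ne_zero (hr : r < 1) (ha : ‖a‖ ≤ r) (hQ : ‖Q‖ ≤ r) :
    qPochInf Q a ≠ 0 := by
  rw [hp_exp_form hr ha hQ]
  exact Complex.exp_ne_zero _

lemma hp_tsum_log_bound (hr : r < 1) (ha : ‖a‖ ≤ r) (hQ : ‖Q‖ ≤ r) :
    ‖∑' j : ℕ, Complex.log (1 - a * Q ^ j)‖
      ≤ ((r * (1 - r)⁻¹ / 2 + 1) * (1 - r)⁻¹) * ‖a‖ := by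
  have h0 : (0:ℝ) ≤ r := le_trans (norm_nonneg a) ha
  have hQ1 : ‖Q‖ < 1 := hQ.trans_lt hr
  have hgs : Summable (fun j : ℕ => ((r * (1 - r)⁻¹ / 2 + 1) * ‖a‖) * ‖Q‖ ^ j) :=
    (summable_geometric_of_lt_one (norm_nonneg Q) hQ1).mul_left _
  have hsn : Summable (fun j : ℕ => ‖Complex.log (1 - a * Q ^ j)‖) := by
    refine Summable.of_nonneg_of_le (fun j => norm_nonneg _) (fun j => ?_) hgs
    calc ‖Complex.log (1 - a * Q ^ j)‖
        ≤ (r * (1 - r)⁻¹ / 2 + 1) * (‖a‖ * ‖Q‖ ^ j) := hp_log_bound hr ha hQ j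
    _ = ((r * (1 - r)⁻¹ / 2 + 1) * ‖a‖) * ‖Q‖ ^ j := by ring
  have h5 : (0:ℝ) ≤ (1 - r)⁻¹ := inv_nonneg.mpr (by linarith)
  have hC : (0:ℝ) ≤ r * (1 - r)⁻¹ / 2 + 1 := by nlinarith
  calc ‖∑' j : ℕ, Complex.log (1 - a * Q ^ j)‖
      ≤ ∑' j : ℕ, ‖Complex.log (1 - a * Q ^ j)‖ := norm_tsum_le_tsum_norm hsn
  _ ≤ ∑' j : ℕ, ((r * (1 - r)⁻¹ / 2 + 1) * ‖a‖) * ‖Q‖ ^ j := by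
      refine Summable.tsum_le_tsum (fun j => ?_) hsn hgs
      calc ‖Complex.log (1 - a * Q ^ j)‖
          ≤ (r * (1 - r)⁻¹ / 2 + 1) * (‖a‖ * ‖Q‖ ^ j) := hp_log_bound hr ha hQ j
      _ = ((r * (1 - r)⁻¹ / 2 + 1) * ‖a‖) * ‖Q‖ ^ j := by ring
  _ = ((r * (1 - r)⁻¹ / 2 + 1) * ‖a‖) * (1 - ‖Q‖)⁻¹ := by
      rw [tsum_mul_left, tsum_geometric_of_lt_one (norm_nonneg Q) hQ1]
  _ ≤ ((r * (1 - r)⁻¹ / 2 + 1) * ‖a‖) * (1 - r)⁻¹ := by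
      refine mul_le_mul_of_nonneg_left ?_ (mul_nonneg hC (norm_nonneg a))
      apply inv_anti₀ <;> linarith [norm_nonneg Q]
  _ = ((r * (1 - r)⁻¹ / 2 + 1) * (1 - r)⁻¹) * ‖a‖ := by ring

lemma hp_norm_le (hr : r < 1) (ha : ‖a‖ ≤ r) (hQ : ‖Q‖ ≤ r) :
    ‖qPochInf Q a‖ ≤ Real.exp (((r * (1 - r)⁻¹ / 2 + 1) * (1 - r)⁻¹) * r) := by
  have h0 : (0:ℝ) ≤ r := le_trans (norm_nonneg a) ha
  rw [hp_exp_form hr ha hQ, Complex.norm_exp]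
  apply Real.exp_le_exp.mpr
  have h1 : (∑' j : ℕ, Complex.log (1 - a * Q ^ j)).re
      ≤ ‖∑' j : ℕ, Complex.log (1 - a * Q ^ j)‖ := Complex.re_le_norm _
  refine h1.trans ((hp_tsum_log_bound hr ha hQ).trans ?_)
  have h5 : (0:ℝ) ≤ (1 - r)⁻¹ := inv_nonneg.mpr (by linarith)
  have hC : (0:ℝ) ≤ (r * (1 - r)⁻¹ / 2 + 1) * (1 - r)⁻¹ := by
    nlinarith [mul_nonneg (mul_nonneg h0 h5) h5]
  exact mul_le_mul_of_nonneg_left ha hC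

lemma hp_shift (hr : r < 1) (ha : ‖a‖ ≤ r) (hQ : ‖Q‖ ≤ r) :
    qPochInf Q a = (1 - a) * qPochInf Q (a * Q) := by
  have h0 : (0:ℝ) ≤ r := le_trans (norm_nonneg a) ha
  have haQ : ‖a * Q‖ ≤ r := by
    calc ‖a * Q‖ = ‖a‖ * ‖Q‖ := norm_mul _ _
    _ ≤ r * 1 := mul_le_mul ha (hQ.trans hr.le) (norm_nonneg Q) h0
    _ = r := mul_one r
  have hm2 : Multipliable (fun n : ℕ => 1 - a * Q ^ (n + 1)) := by
    refine (hp_multipliable (a := a * Q) hr haQ hQ).congr fun b => ?_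
    rw [pow_succ]; ring
  have h := tprod_eq_zero_mul' (f := fun n : ℕ => 1 - a * Q ^ n) hm2
  simp only [pow_zero, mul_one] at h
  rw [qPochInf, h, qPochInf]
  congr 1
  exact tprod_congr fun b => by rw [pow_succ]; ring

lemma hp_qPoch_norm_le (hr : r < 1) (hQ : ‖Q‖ ≤ r) (h0 : (0:ℝ) ≤ r) (n : ℕ) :
    ‖qPoch Q Q n‖ ≤ Real.exp ((1 - r)⁻¹) := by
  unfold qPoch
  calc ‖∏ j ∈ Finset.range n, (1 - Q * Q ^ j)‖
      = ∏ j ∈ Finset.range n, ‖1 - Q * Q ^ j‖ := by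
        rw [norm_prod]
  _ ≤ ∏ j ∈ Finset.range n, Real.exp (r ^ j) := by
      refine Finset.prod_le_prod (fun j _ => norm_nonneg _) (fun j _ => ?_)
      have h1 : ‖1 - Q * Q ^ j‖ ≤ 1 + ‖Q‖ * ‖Q‖ ^ j := by
        calc ‖1 - Q * Q ^ j‖ ≤ ‖(1:ℂ)‖ + ‖Q * Q ^ j‖ := norm_sub_le _ _
        _ = 1 + ‖Q‖ * ‖Q‖ ^ j := by rw [norm_one, norm_mul, norm_pow]
      have h2 : ‖Q‖ * ‖Q‖ ^ j ≤ r ^ j := by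
        calc ‖Q‖ * ‖Q‖ ^ j ≤ 1 * r ^ j :=
              mul_le_mul (hQ.trans hr.le) (pow_le_pow_left₀ (norm_nonneg Q) hQ j)
                (by positivity) one_pos.le
        _ = r ^ j := one_mul _
      have h3 : 1 + r ^ j ≤ Real.exp (r ^ j) := by
        have := Real.add_one_le_exp (r ^ j)
        linarith
      linarith
  _ = Real.exp (∑ j ∈ Finset.range n, r ^ j) := by rw [Real.exp_sum]
  _ ≤ Real.exp ((1 - r)⁻¹) := by
      apply Real.exp_le_exp.mpr
      calc ∑ j ∈ Finset.range n, r ^ j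
          ≤ ∑' j : ℕ, r ^ j :=
            Summable.sum_le_tsum _ (fun i _ => by positivity)
              (summable_geometric_of_lt_one h0 hr)
      _ = (1 - r)⁻¹ := tsum_geometric_of_lt_one h0 hr

lemma hp_tendsto_one {q : ℂ} (hq : ‖q‖ < 1) (σ : ℕ → ℂ)
    (hσ : ∀ n, ‖σ n‖ ≤ ‖q‖ ^ (n + 1)) :
    Tendsto (fun n => qPochInf q (σ n)) atTop (𝓝 1) := by
  have h0 : (0:ℝ) ≤ ‖q‖ := norm_nonneg q
  have hσr : ∀ n, ‖σ n‖ ≤ ‖q‖ := by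
    intro n
    refine (hσ n).trans ?_
    calc ‖q‖ ^ (n + 1) ≤ ‖q‖ ^ 1 := pow_le_pow_of_le_one h0 hq.le (by omega)
    _ = ‖q‖ := pow_one _
  have heq : ∀ n, qPochInf q (σ n)
      = Complex.exp (∑' j : ℕ, Complex.log (1 - σ n * q ^ j)) :=
    fun n => hp_exp_form hq (hσr n) le_rfl
  have hT : Tendsto (fun n => ∑' j : ℕ, Complex.log (1 - σ n * q ^ j)) atTop (𝓝 0) := by
    rw [tendsto_zero_iff_norm_tendsto_zero]
    have hb : ∀ n, ‖∑' j : ℕ, Complex.log (1 - σ n * q ^ j)‖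
        ≤ ((‖q‖ * (1 - ‖q‖)⁻¹ / 2 + 1) * (1 - ‖q‖)⁻¹) * ‖q‖ ^ (n + 1) := by
      intro n
      refine (hp_tsum_log_bound hq (hσr n) le_rfl).trans ?_
      have h5 : (0:ℝ) ≤ (1 - ‖q‖)⁻¹ := inv_nonneg.mpr (by linarith)
      have hC : (0:ℝ) ≤ (‖q‖ * (1 - ‖q‖)⁻¹ / 2 + 1) * (1 - ‖q‖)⁻¹ := by
        nlinarith [mul_nonneg (mul_nonneg h0 h5) h5]
      exact mul_le_mul_of_nonneg_left (hσ n) hC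
    have hlim : Tendsto (fun n : ℕ =>
        ((‖q‖ * (1 - ‖q‖)⁻¹ / 2 + 1) * (1 - ‖q‖)⁻¹) * ‖q‖ ^ (n + 1)) atTop (𝓝 0) := by
      rw [show (0:ℝ) = ((‖q‖ * (1 - ‖q‖)⁻¹ / 2 + 1) * (1 - ‖q‖)⁻¹) * 0 by ring]
      apply Tendsto.const_mul
      exact (tendsto_pow_atTop_nhds_zero_of_lt_one h0 hq).comp (tendsto_add_atTop_nat 1)
    exact squeeze_zero (fun n => norm_nonneg _) hb hlim
  have := (Complex.continuous_exp.tendsto 0).comp hT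
  rw [Complex.exp_zero] at this
  refine this.congr (fun n => ?_)
  exact (heq n).symm

end Helpers

noncomputable def Gaux (q : ℂ) (n : ℕ) : ℂ :=
  qPochInf q (q ^ (n + 1)) * qPochInf q (-q ^ (n + 1)) ^ 2 * qPoch (q ^ 3) (q ^ 3) n

theorem thmAp_a (q : ℂ) (hq : ‖q‖ < 1) :
    ∑' n : ℕ, q ^ (n + 1) * qPochInf q (q ^ (n + 1)) *
        (qPochInf q (-q ^ (n + 2))) ^ 2 * qPoch (q ^ 3) (q ^ 3) n
      = qPochInf (q ^ 2) (q ^ 2) / qPochInf (q ^ 2) q - qPochInf (q ^ 3) (q ^ 3) := by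
  have hq' : ‖q‖ < 1 := by exact hq
  have h0 : (0:ℝ) ≤ ‖q‖ := norm_nonneg q
  have hnp : ∀ k : ℕ, ‖q ^ (k + 1)‖ ≤ ‖q‖ := by
    intro k
    rw [norm_pow]
    calc ‖q‖ ^ (k + 1) ≤ ‖q‖ ^ 1 := pow_le_pow_of_le_one h0 hq'.le (by omega)
    _ = ‖q‖ := pow_one _
  have hnn : ∀ k : ℕ, ‖-q ^ (k + 1)‖ ≤ ‖q‖ := fun k => by rw [norm_neg]; exact hnp k
  have hq2 : ‖q ^ 2‖ ≤ ‖q‖ := hnp 1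
  have hq3 : ‖q ^ 3‖ ≤ ‖q‖ := hnp 2
  -- recurrences
  have hA : ∀ n : ℕ, qPochInf q (q ^ (n + 1))
      = (1 - q ^ (n + 1)) * qPochInf q (q ^ (n + 2)) := by
    intro n
    have h := hp_shift (Q := q) (a := q ^ (n + 1)) hq' (hnp n) le_rfl
    rw [h, ← pow_succ]
  have hB : ∀ n : ℕ, qPochInf q (-q ^ (n + 1))
      = (1 + q ^ (n + 1)) * qPochInf q (-q ^ (n + 2)) := by
    intro n
    have h := hp_shift (Q := q) (a := -q ^ (n + 1)) hq' (hnn n) le_rfl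
    rw [h, show (-q ^ (n + 1)) * q = -q ^ (n + 2) by rw [pow_succ]; ring,
      show (1 : ℂ) - -q ^ (n + 1) = 1 + q ^ (n + 1) by ring]
  have hCC : ∀ n : ℕ, qPoch (q ^ 3) (q ^ 3) (n + 1)
      = qPoch (q ^ 3) (q ^ 3) n * (1 - q ^ 3 * (q ^ 3) ^ n) := fun n =>
    Finset.prod_range_succ _ n
  -- step : summand = Gaux n - Gaux (n+1)
  have hstep : ∀ n : ℕ, q ^ (n + 1) * qPochInf q (q ^ (n + 1)) *
      (qPochInf q (-q ^ (n + 2))) ^ 2 * qPoch (q ^ 3) (q ^ 3) n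
      = Gaux q n - Gaux q (n + 1) := by
    intro n
    have e3 : q ^ 3 * (q ^ 3) ^ n = (q ^ (n + 1)) ^ 3 := by ring
    rw [Gaux, Gaux, hCC n, hA n, hB n, e3]
    ring
  -- bounds
  set K : ℝ := Real.exp (((‖q‖ * (1 - ‖q‖)⁻¹ / 2 + 1) * (1 - ‖q‖)⁻¹) * ‖q‖) with hK
  set Kc : ℝ := Real.exp ((1 - ‖q‖)⁻¹) with hKc
  have hKpos : (0:ℝ) < K := Real.exp_pos _
  have hKcpos : (0:ℝ) < Kc := Real.exp_pos _
  have hsum : Summable (fun n : ℕ => q ^ (n + 1) * qPochInf q (q ^ (n + 1)) *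
      (qPochInf q (-q ^ (n + 2))) ^ 2 * qPoch (q ^ 3) (q ^ 3) n) := by
    refine Summable.of_norm_bounded (g := fun n => (K * K ^ 2 * Kc * ‖q‖) * ‖q‖ ^ n) ?_ ?_
    · exact (summable_geometric_of_lt_one h0 hq').mul_left _
    · intro n
      have b1 : ‖qPochInf q (q ^ (n + 1))‖ ≤ K := hp_norm_le hq' (hnp n) le_rfl
      have b2 : ‖qPochInf q (-q ^ (n + 2))‖ ≤ K := hp_norm_le hq' (hnn (n + 1)) le_rfl
      have b3 : ‖qPoch (q ^ 3) (q ^ 3) n‖ ≤ Kc := hp_qPoch_norm_le hq' hq3 h0 n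
      calc ‖q ^ (n + 1) * qPochInf q (q ^ (n + 1)) *
            (qPochInf q (-q ^ (n + 2))) ^ 2 * qPoch (q ^ 3) (q ^ 3) n‖
          = ‖q‖ ^ (n + 1) * ‖qPochInf q (q ^ (n + 1))‖ *
            ‖qPochInf q (-q ^ (n + 2))‖ ^ 2 * ‖qPoch (q ^ 3) (q ^ 3) n‖ := by
            rw [norm_mul, norm_mul, norm_mul, norm_pow, norm_pow]
      _ ≤ ‖q‖ ^ (n + 1) * K * K ^ 2 * Kc := by gcongr
      _ = (K * K ^ 2 * Kc * ‖q‖) * ‖q‖ ^ n := by ring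
  -- limits
  have hAl : Tendsto (fun n : ℕ => qPochInf q (q ^ (n + 1))) atTop (𝓝 1) :=
    hp_tendsto_one hq' (fun n => q ^ (n + 1)) (fun n => by rw [norm_pow])
  have hBl : Tendsto (fun n : ℕ => qPochInf q (-q ^ (n + 1))) atTop (𝓝 1) :=
    hp_tendsto_one hq' (fun n => -q ^ (n + 1)) (fun n => by rw [norm_neg, norm_pow])
  have hCl : Tendsto (fun n : ℕ => qPoch (q ^ 3) (q ^ 3) n) atTop
      (𝓝 (qPochInf (q ^ 3) (q ^ 3))) := by
    have hm : Multipliable (fun j : ℕ => 1 - q ^ 3 * (q ^ 3) ^ j) :=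
      hp_multipliable hq' hq3 hq3
    exact hm.hasProd.tendsto_prod_nat
  have hGl : Tendsto (Gaux q) atTop (𝓝 (qPochInf (q ^ 3) (q ^ 3))) := by
    have := (hAl.mul (hBl.pow 2)).mul hCl
    simp only [one_pow, one_mul] at this
    exact this
  -- telescoping
  have hhs : HasSum (fun n : ℕ => q ^ (n + 1) * qPochInf q (q ^ (n + 1)) *
      (qPochInf q (-q ^ (n + 2))) ^ 2 * qPoch (q ^ 3) (q ^ 3) n)
      (Gaux q 0 - qPochInf (q ^ 3) (q ^ 3)) := by
    rw [hsum.hasSum_iff_tendsto_nat]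
    have hps : ∀ n : ℕ, (∑ i ∈ Finset.range n, (q ^ (i + 1) * qPochInf q (q ^ (i + 1)) *
        (qPochInf q (-q ^ (i + 2))) ^ 2 * qPoch (q ^ 3) (q ^ 3) i))
        = Gaux q 0 - Gaux q n := by
      intro n
      rw [Finset.sum_congr rfl (fun i _ => hstep i)]
      exact Finset.sum_range_sub' (Gaux q) n
    refine Tendsto.congr (fun n => (hps n).symm) ?_
    exact tendsto_const_nhds.sub hGl
  rw [hhs.tsum_eq]
  congr 1
  -- Gaux q 0 = E / O
  have hG0 : Gaux q 0 = qPochInf q q * qPochInf q (-q) ^ 2 := by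
    simp [Gaux, qPoch, pow_one]
  set P1 : ℂ := qPochInf q q with hP1d
  set P2 : ℂ := qPochInf q (-q) with hP2d
  set E : ℂ := qPochInf (q ^ 2) (q ^ 2) with hEd
  set O : ℂ := qPochInf (q ^ 2) q with hOd
  have hnq : ‖-q‖ ≤ ‖q‖ := by rw [norm_neg]
  have hP1ne : P1 ≠ 0 := hp_ne_zero hq' le_rfl le_rfl
  have hEne : E ≠ 0 := hp_ne_zero hq' hq2 hq2
  have hOne : O ≠ 0 := hp_ne_zero hq' le_rfl hq2
  -- identity (i): O * E = P1
  have hi : O * E = P1 := by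
    have heven : Multipliable (fun k : ℕ => 1 - q * q ^ (2 * k)) := by
      refine (hp_multipliable (Q := q ^ 2) (a := q) hq' le_rfl hq2).congr fun k => ?_
      ring
    have hodd : Multipliable (fun k : ℕ => 1 - q * q ^ (2 * k + 1)) := by
      refine (hp_multipliable (Q := q ^ 2) (a := q ^ 2) hq' hq2 hq2).congr fun k => ?_
      ring
    have h := tprod_even_mul_odd (f := fun k : ℕ => 1 - q * q ^ k) heven hodd
    have h1 : (∏' k : ℕ, (1 - q * q ^ (2 * k))) = O := tprod_congr fun k => by ring
    have h2 : (∏' k : ℕ, (1 - q * q ^ (2 * k + 1))) = E := tprod_congr fun k => by ring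
    rw [h1, h2] at h
    exact h
  -- identity (ii): P1 * P2 = E
  have hii : P1 * P2 = E := by
    have hm1 : Multipliable (fun j : ℕ => 1 - q * q ^ j) :=
      hp_multipliable hq' le_rfl le_rfl
    have hm2 : Multipliable (fun j : ℕ => 1 - (-q) * q ^ j) :=
      hp_multipliable hq' hnq le_rfl
    have h := Multipliable.tprod_mul hm1 hm2
    have h3 : (∏' j : ℕ, ((1 - q * q ^ j) * (1 - (-q) * q ^ j))) = E :=
      tprod_congr fun j => by ring
    rw [h3] at h
    exact h.symm
  have hop : O * P2 = 1 := by
    have h4 : P1 * (O * P2 - 1) = 0 := by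
      have : P1 * (O * P2 - 1) = (P1 * P2) * O - P1 := by ring
      rw [this, hii, mul_comm E O, hi]
      ring
    rcases mul_eq_zero.mp h4 with h | h
    · exact absurd h hP1ne
    · exact sub_eq_zero.mp h
  rw [hG0, eq_div_iff hOne]
  calc P1 * P2 ^ 2 * O = (P1 * P2) * (O * P2) := by ring
  _ = E := by rw [hii, hop, mul_one]
end

section
/- For every complex number q with |q| < 1, ∑_{n≥1} q^n (q^n; q)_∞ (q^{n+1}; q)_∞^2 (q^3; q^3)_{n−1} = (1/3)·( (q^3; q^3)_∞ − (q; q)_∞^3 ). -/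
open Finset Filter Topology

private lemma aux_ne_zero {q : ℂ} (hq : ‖q‖ < 1) {m : ℕ} (hm : 1 ≤ m) :
    1 - q ^ m ≠ 0 := by
  intro h
  have h1 : q ^ m = 1 := by linear_combination -h
  have : ‖q‖ ^ m < 1 := by
    calc ‖q‖ ^ m ≤ ‖q‖ ^ 1 :=
      pow_le_pow_of_le_one (norm_nonneg q) hq.le hm
    _ < 1 := by simpa using hq
  rw [← norm_pow, h1] at this
  simp at this

private lemma aux_multipliable {q : ℂ} (hq : ‖q‖ < 1) (a : ℂ)
    (ha : ∀ j : ℕ, 1 - a * q ^ j ≠ 0) :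
    Multipliable fun j : ℕ => 1 - a * q ^ j := by
  have hlog : Summable fun j : ℕ => Complex.log (1 - a * q ^ j) := by
    have hg : Summable fun j : ℕ =>
        (3/2 : ℝ) * (‖a‖ * ‖q‖ ^ j) :=
      ((summable_geometric_of_lt_one (norm_nonneg q) hq).mul_left _).mul_left _
    refine hg.of_norm_bounded_eventually_nat ?_
    have h0 : Tendsto (fun j : ℕ => ‖a‖ * ‖q‖ ^ j) atTop (𝓝 0) := by
      simpa using (tendsto_pow_atTop_nhds_zero_of_lt_one (norm_nonneg q) hq).const_mul
        (‖a‖)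
    filter_upwards [h0.eventually (ge_mem_nhds (by norm_num : (0:ℝ) < 1/2))] with j hj
    have habs : ‖-(a * q ^ j)‖ ≤ 1/2 := by
      simpa [norm_mul, norm_pow] using hj
    have hkey := Complex.norm_log_one_add_half_le_self habs
    calc ‖Complex.log (1 - a * q ^ j)‖ = ‖Complex.log (1 + -(a * q ^ j))‖ := by ring_nf
      _ ≤ 3/2 * ‖-(a * q ^ j)‖ := hkey
      _ = 3/2 * (‖a‖ * ‖q‖ ^ j) := by
          simp [norm_mul, norm_pow]
  exact Complex.multipliable_of_summable_log hlog

private lemma aux_sum_le {q : ℂ} (hq : ‖q‖ < 1) (a : ℂ) (s : Finset ℕ) :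
    ∑ j ∈ s, ‖a‖ * ‖q‖ ^ j
      ≤ ‖a‖ * (1 - ‖q‖)⁻¹ := by
  have hsum : Summable fun j : ℕ => ‖a‖ * ‖q‖ ^ j :=
    (summable_geometric_of_lt_one (norm_nonneg q) hq).mul_left _
  have := Summable.sum_le_tsum s (fun j _ => by positivity) hsum
  rwa [tsum_mul_left, tsum_geometric_of_lt_one (norm_nonneg q) hq] at this

private lemma aux_finprod_abs_le {q : ℂ} (hq : ‖q‖ < 1) (a : ℂ) (s : Finset ℕ) :
    ‖∏ j ∈ s, (1 - a * q ^ j)‖ ≤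
      Real.exp (‖a‖ * (1 - ‖q‖)⁻¹) := by
  have h1 : ‖∏ j ∈ s, (1 - a * q ^ j)‖
      ≤ ∏ j ∈ s, (1 + ‖a‖ * ‖q‖ ^ j) := by
    rw [norm_prod]
    refine Finset.prod_le_prod (fun j _ => norm_nonneg _) (fun j _ => ?_)
    calc ‖1 - a * q ^ j‖ ≤ ‖(1:ℂ)‖ + ‖a * q ^ j‖ := by
          simpa using norm_sub_le 1 (a * q ^ j)
      _ = 1 + ‖a‖ * ‖q‖ ^ j := by simp [norm_mul, norm_pow]
  have h2 : ∏ j ∈ s, (1 + ‖a‖ * ‖q‖ ^ j)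
      ≤ Real.exp (∑ j ∈ s, ‖a‖ * ‖q‖ ^ j) := by
    rw [Real.exp_sum]
    refine Finset.prod_le_prod (fun j _ => by positivity) (fun j _ => ?_)
    have := Real.add_one_le_exp (‖a‖ * ‖q‖ ^ j)
    linarith
  exact h1.trans (h2.trans (Real.exp_le_exp.mpr (aux_sum_le hq a s)))

private lemma aux_finprod_sub_one_le (g : ℕ → ℂ) (s : Finset ℕ) :
    ‖∏ j ∈ s, (1 + g j) - 1‖ ≤ ∏ j ∈ s, (1 + ‖g j‖) - 1 := by
  induction s using Finset.cons_induction with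
  | empty => simp
  | cons a s ha ih =>
    rw [Finset.prod_cons, Finset.prod_cons]
    have hQ1 : (1:ℝ) ≤ ∏ j ∈ s, (1 + ‖g j‖) := by
      calc (1:ℝ) = ∏ _j ∈ s, (1:ℝ) := by simp
        _ ≤ ∏ j ∈ s, (1 + ‖g j‖) :=
          Finset.prod_le_prod (fun j _ => zero_le_one)
            (fun j _ => le_add_of_nonneg_right (norm_nonneg _))
    have habs1 : ‖1 + g a‖ ≤ 1 + ‖g a‖ := by
      calc ‖1 + g a‖ ≤ ‖(1:ℂ)‖ + ‖g a‖ :=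
        norm_add_le 1 (g a)
      _ = 1 + ‖g a‖ := by simp
    have key : (1 + g a) * ∏ j ∈ s, (1 + g j) - 1
        = (1 + g a) * (∏ j ∈ s, (1 + g j) - 1) + g a := by ring
    rw [key]
    calc ‖(1 + g a) * (∏ j ∈ s, (1 + g j) - 1) + g a‖
        ≤ ‖(1 + g a) * (∏ j ∈ s, (1 + g j) - 1)‖ + ‖g a‖ :=
          norm_add_le _ _
      _ = ‖1 + g a‖ * ‖∏ j ∈ s, (1 + g j) - 1‖
            + ‖g a‖ := by rw [norm_mul]
      _ ≤ (1 + ‖g a‖) * (∏ j ∈ s, (1 + ‖g j‖) - 1)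
            + ‖g a‖ := by
          have := mul_le_mul habs1 ih (norm_nonneg _) (by positivity)
          linarith
      _ = (1 + ‖g a‖) * ∏ j ∈ s, (1 + ‖g j‖) - 1 := by ring

private lemma aux_finprod_sub_one_abs_le {q : ℂ} (hq : ‖q‖ < 1) (a : ℂ)
    (s : Finset ℕ) :
    ‖∏ j ∈ s, (1 - a * q ^ j) - 1‖ ≤
      Real.exp (‖a‖ * (1 - ‖q‖)⁻¹) - 1 := by
  have h0 : ∀ j : ℕ, (1 : ℂ) - a * q ^ j = 1 + -(a * q ^ j) := fun j => by ring
  have h1 := aux_finprod_sub_one_le (fun j => -(a * q ^ j)) s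
  simp only [norm_neg, norm_mul, norm_pow] at h1
  have h2 : ‖∏ j ∈ s, (1 - a * q ^ j) - 1‖
      ≤ ∏ j ∈ s, (1 + ‖a‖ * ‖q‖ ^ j) - 1 := by
    calc ‖∏ j ∈ s, (1 - a * q ^ j) - 1‖
        = ‖∏ j ∈ s, (1 + -(a * q ^ j)) - 1‖ := by
          rw [Finset.prod_congr rfl (fun j (_ : j ∈ s) => h0 j)]
      _ ≤ ∏ j ∈ s, (1 + ‖a‖ * ‖q‖ ^ j) - 1 := h1
  have h3 : ∏ j ∈ s, (1 + ‖a‖ * ‖q‖ ^ j)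
      ≤ Real.exp (‖a‖ * (1 - ‖q‖)⁻¹) := by
    have h4 : ∏ j ∈ s, (1 + ‖a‖ * ‖q‖ ^ j)
        ≤ Real.exp (∑ j ∈ s, ‖a‖ * ‖q‖ ^ j) := by
      rw [Real.exp_sum]
      refine Finset.prod_le_prod (fun j _ => by positivity) (fun j _ => ?_)
      have := Real.add_one_le_exp (‖a‖ * ‖q‖ ^ j)
      linarith
    exact h4.trans (Real.exp_le_exp.mpr (aux_sum_le hq a s))
  linarith

private lemma aux_tprod_abs_le {q : ℂ} (hq : ‖q‖ < 1) (a : ℂ)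
    (ha : ∀ j : ℕ, 1 - a * q ^ j ≠ 0) :
    ‖qPochInf q a‖ ≤ Real.exp (‖a‖ * (1 - ‖q‖)⁻¹) := by
  have hm := aux_multipliable hq a ha
  have ht : Tendsto (fun s : Finset ℕ => ‖∏ j ∈ s, (1 - a * q ^ j)‖)
      atTop (𝓝 (‖qPochInf q a‖)) :=
    (continuous_norm.tendsto _).comp hm.hasProd
  exact le_of_tendsto' ht (fun s => aux_finprod_abs_le hq a s)

private lemma aux_tprod_sub_one_abs_le {q : ℂ} (hq : ‖q‖ < 1) (a : ℂ)
    (ha : ∀ j : ℕ, 1 - a * q ^ j ≠ 0) :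
    ‖qPochInf q a - 1‖ ≤
      Real.exp (‖a‖ * (1 - ‖q‖)⁻¹) - 1 := by
  have hm := aux_multipliable hq a ha
  have ht : Tendsto (fun s : Finset ℕ => ‖∏ j ∈ s, (1 - a * q ^ j) - 1‖)
      atTop (𝓝 (‖qPochInf q a - 1‖)) :=
    (continuous_norm.tendsto _).comp (hm.hasProd.sub_const 1)
  exact le_of_tendsto' ht (fun s => aux_finprod_sub_one_abs_le hq a s)

theorem thmAp_b (q : ℂ) (hq : ‖q‖ < 1) :
    ∑' n : ℕ, q ^ (n + 1) * qPochInf q (q ^ (n + 1)) *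
        (qPochInf q (q ^ (n + 2))) ^ 2 * qPoch (q ^ 3) (q ^ 3) n
      = (1 / 3) * (qPochInf (q ^ 3) (q ^ 3) - (qPochInf q q) ^ 3) := by
  set r := ‖q‖ with hr
  have hr0 : 0 ≤ r := norm_nonneg q
  -- nonvanishing of factors
  have hne : ∀ k : ℕ, 1 ≤ k → ∀ j : ℕ, 1 - q ^ k * q ^ j ≠ 0 := by
    intro k hk j
    rw [← pow_add]
    exact aux_ne_zero hq (le_trans hk (Nat.le_add_right k j))
  have hne3 : ∀ j : ℕ, 1 - q ^ 3 * (q ^ 3) ^ j ≠ 0 := by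
    intro j
    rw [← pow_mul, ← pow_add]
    exact aux_ne_zero hq (by omega)
  have hq3 : ‖q ^ 3‖ < 1 := by
    rw [norm_pow]
    exact pow_lt_one₀ hr0 hq (by norm_num)
  -- multipliability
  have hmul : ∀ k : ℕ, 1 ≤ k → Multipliable fun j : ℕ => 1 - q ^ k * q ^ j :=
    fun k hk => aux_multipliable hq (q ^ k) (hne k hk)
  have hmul3 : Multipliable fun j : ℕ => 1 - q ^ 3 * (q ^ 3) ^ j :=
    aux_multipliable hq3 (q ^ 3) hne3
  -- peeling lemma
  have hpeel : ∀ n : ℕ, qPochInf q (q ^ (n + 1))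
      = (1 - q ^ (n + 1)) * qPochInf q (q ^ (n + 2)) := by
    intro n
    have h2 : (fun j : ℕ => 1 - q ^ (n + 1) * q ^ (j + 1))
        = fun j : ℕ => 1 - q ^ (n + 2) * q ^ j := by
      funext j; ring
    have hm2 : Multipliable fun j : ℕ => 1 - q ^ (n + 1) * q ^ (j + 1) := by
      rw [h2]; exact hmul (n + 2) (by omega)
    have h1 := tprod_eq_zero_mul' (f := fun j : ℕ => 1 - q ^ (n + 1) * q ^ j) hm2
    simp only [qPochInf]
    rw [h1, h2]
    norm_num
  -- the telescoping function
  set F : ℕ → ℂ := fun n => (qPochInf q (q ^ (n + 1))) ^ 3 * qPoch (q ^ 3) (q ^ 3) n with hF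
  -- summand identity
  have hterm : ∀ n : ℕ, q ^ (n + 1) * qPochInf q (q ^ (n + 1)) *
      (qPochInf q (q ^ (n + 2))) ^ 2 * qPoch (q ^ 3) (q ^ 3) n
      = (1 / 3) * (F (n + 1) - F n) := by
    intro n
    have hC : qPoch (q ^ 3) (q ^ 3) (n + 1)
        = qPoch (q ^ 3) (q ^ 3) n * (1 - (q ^ (n + 1)) ^ 3) := by
      rw [qPoch, qPoch, Finset.prod_range_succ]
      congr 2
      ring
    have hidx : qPochInf q (q ^ (n + 1 + 1)) = qPochInf q (q ^ (n + 2)) := by norm_num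
    simp only [hF, hC, hidx, hpeel n]
    ring
  -- bound on each factor
  set K : ℝ := Real.exp ((1 - r)⁻¹) with hK
  have hrpow : ∀ m : ℕ, ‖q ^ m‖ ≤ 1 := by
    intro m
    rw [norm_pow]
    exact pow_le_one₀ hr0 hq.le
  have hinv0 : 0 ≤ (1 - r)⁻¹ := by
    have : 0 < 1 - r := by linarith
    positivity
  have hfac : ∀ a : ℂ, ‖a‖ ≤ 1 → (∀ j : ℕ, 1 - a * q ^ j ≠ 0) →
      ‖qPochInf q a‖ ≤ K := by
    intro a ha hane
    refine (aux_tprod_abs_le hq a hane).trans (Real.exp_le_exp.mpr ?_)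
    calc ‖a‖ * (1 - r)⁻¹ ≤ 1 * (1 - r)⁻¹ := by
          exact mul_le_mul_of_nonneg_right ha hinv0
      _ = (1 - r)⁻¹ := one_mul _
  have hfacP : ∀ n : ℕ, ‖qPoch (q ^ 3) (q ^ 3) n‖ ≤ K := by
    intro n
    rw [qPoch]
    refine (aux_finprod_abs_le hq3 (q ^ 3) (Finset.range n)).trans (Real.exp_le_exp.mpr ?_)
    have h1 : ‖q ^ 3‖ ≤ 1 := hrpow 3
    have h2 : (1 - ‖q ^ 3‖)⁻¹ ≤ (1 - r)⁻¹ := by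
      have hq3' : ‖q ^ 3‖ ≤ r := by
        rw [norm_pow]
        exact pow_le_pow_of_le_one hr0 hq.le (by omega) |>.trans_eq (pow_one r)
      have h3 : 0 < 1 - r := by linarith
      have h4 : 0 < 1 - ‖q ^ 3‖ := by linarith
      exact inv_anti₀ h3 (by linarith)
    have h5 : 0 ≤ (1 - ‖q ^ 3‖)⁻¹ := by
      have : 0 < 1 - ‖q ^ 3‖ := by linarith [hq3]
      positivity
    calc ‖q ^ 3‖ * (1 - ‖q ^ 3‖)⁻¹
        ≤ 1 * (1 - r)⁻¹ := mul_le_mul h1 h2 h5 zero_le_one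
      _ = (1 - r)⁻¹ := one_mul _
  have hK0 : 0 ≤ K := Real.exp_nonneg _
  -- summability
  have hsummable : Summable fun n : ℕ => q ^ (n + 1) * qPochInf q (q ^ (n + 1)) *
      (qPochInf q (q ^ (n + 2))) ^ 2 * qPoch (q ^ 3) (q ^ 3) n := by
    have hg : Summable fun n : ℕ => K ^ 3 * K * (r ^ n * r) :=
      (((summable_geometric_of_lt_one hr0 hq).mul_right r).mul_left (K ^ 3 * K))
    refine hg.of_norm_bounded (fun n => ?_)
    rw [norm_mul, norm_mul, norm_mul, norm_pow, norm_pow]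
    have e1 : ‖qPochInf q (q ^ (n + 1))‖ ≤ K :=
      hfac _ (hrpow (n + 1)) (hne (n + 1) (by omega))
    have e2 : ‖qPochInf q (q ^ (n + 2))‖ ≤ K :=
      hfac _ (hrpow (n + 2)) (hne (n + 2) (by omega))
    have e3 : ‖qPoch (q ^ 3) (q ^ 3) n‖ ≤ K := hfacP n
    have e0 : ‖q‖ ^ (n + 1) = r ^ n * r := by rw [pow_succ]
    have hA := norm_nonneg (qPochInf q (q ^ (n + 1)))
    have hB := norm_nonneg (qPochInf q (q ^ (n + 2)))
    have hCc := norm_nonneg (qPoch (q ^ 3) (q ^ 3) n)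
    calc ‖q‖ ^ (n + 1) * ‖qPochInf q (q ^ (n + 1))‖ *
          ‖qPochInf q (q ^ (n + 2))‖ ^ 2 * ‖qPoch (q ^ 3) (q ^ 3) n‖
        ≤ ‖q‖ ^ (n + 1) * K * K ^ 2 * K := by
          gcongr <;> first
            | exact pow_nonneg hr0 _
            | exact e1
            | exact e2
            | exact e3
      _ = K ^ 3 * K * (r ^ n * r) := by rw [e0]; ring
  -- limits
  have hA1 : Tendsto (fun n : ℕ => qPochInf q (q ^ (n + 1))) atTop (𝓝 1) := by
    rw [← tendsto_sub_nhds_zero_iff]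
    have hb : Tendsto (fun n : ℕ => Real.exp (r ^ (n + 1) * (1 - r)⁻¹) - 1) atTop (𝓝 0) := by
      have h1 : Tendsto (fun n : ℕ => r ^ (n + 1) * (1 - r)⁻¹) atTop (𝓝 0) := by
        have := ((tendsto_pow_atTop_nhds_zero_of_lt_one hr0 hq).comp
          (tendsto_add_atTop_nat 1)).mul_const ((1 - r)⁻¹)
        simpa using this
      have h2 := (Real.continuous_exp.tendsto 0).comp h1
      simpa using h2.sub_const 1
    refine squeeze_zero_norm (fun n => ?_) hb
    have := aux_tprod_sub_one_abs_le hq (q ^ (n + 1)) (hne (n + 1) (by omega))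
    refine this.trans ?_
    have : ‖q ^ (n + 1)‖ = r ^ (n + 1) := norm_pow _ _
    rw [this]
  have hC1 : Tendsto (fun n : ℕ => qPoch (q ^ 3) (q ^ 3) n) atTop
      (𝓝 (qPochInf (q ^ 3) (q ^ 3))) := by
    have := hmul3.hasProd.tendsto_prod_nat
    simpa [qPoch, qPochInf] using this
  have hFlim : Tendsto F atTop (𝓝 (qPochInf (q ^ 3) (q ^ 3))) := by
    have := ((hA1.pow 3).mul hC1)
    simpa [hF] using this
  -- telescoping partial sums
  have hpartial : ∀ n : ℕ, ∑ i ∈ Finset.range n,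
      (q ^ (i + 1) * qPochInf q (q ^ (i + 1)) *
        (qPochInf q (q ^ (i + 2))) ^ 2 * qPoch (q ^ 3) (q ^ 3) i)
      = (1 / 3) * (F n - F 0) := by
    intro n
    rw [Finset.sum_congr rfl (fun i _ => hterm i), ← Finset.mul_sum,
      Finset.sum_range_sub F]
  have hF0 : F 0 = (qPochInf q q) ^ 3 := by
    simp [hF, qPoch, pow_one]
  have htend : Tendsto (fun n : ℕ => ∑ i ∈ Finset.range n,
      (q ^ (i + 1) * qPochInf q (q ^ (i + 1)) *
        (qPochInf q (q ^ (i + 2))) ^ 2 * qPoch (q ^ 3) (q ^ 3) i)) atTop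
      (𝓝 ((1 / 3) * (qPochInf (q ^ 3) (q ^ 3) - (qPochInf q q) ^ 3))) := by
    simp only [hpartial, ← hF0]
    exact (hFlim.sub_const (F 0)).const_mul (1 / 3)
  exact ((hsummable.hasSum_iff_tendsto_nat).mpr htend).tsum_eq
end

section
/- For every complex number q with |q| < 1, ∑_{n≥1} q^n (−q^n; q)_∞ (−q^{n+1}; q)_∞^2 (−q^3; q^3)_{n−1} = (1/3)·( (−q; q)_∞^3 − (−q^3; q^3)_∞ ). -/
open Finset Filter Topology

/-- `(-u^m; u)_∞` as a clean infinite product. -/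
noncomputable def Pinf (u : ℂ) (m : ℕ) : ℂ := ∏' j : ℕ, (1 + u ^ (m + j))

lemma qPochInf_eq (u : ℂ) (m : ℕ) : qPochInf u (-u ^ m) = Pinf u m := by
  refine tprod_congr fun j => ?_
  rw [pow_add]; ring

/-- finite product bound via exp -/
lemma finprod_one_add_le (t : ℕ → ℝ) (ht : ∀ j, 0 ≤ t j) (s : Finset ℕ) :
    ∏ j ∈ s, (1 + t j) ≤ Real.exp (∑ j ∈ s, t j) := by
  rw [Real.exp_sum]
  apply Finset.prod_le_prod
  · intro i _; linarith [ht i]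
  · intro i _; rw [add_comm]; exact Real.add_one_le_exp _

lemma norm_finprod_one_add_sub_one_le (x : ℕ → ℂ) (s : Finset ℕ) :
    ‖(∏ j ∈ s, (1 + x j)) - 1‖ ≤ (∏ j ∈ s, (1 + ‖x j‖)) - 1 := by
  classical
  induction s using Finset.induction with
  | empty => simp
  | @insert a s ha ih =>
    rw [Finset.prod_insert ha, Finset.prod_insert ha]
    have key : (1 + x a) * ∏ j ∈ s, (1 + x j) - 1
        = (1 + x a) * ((∏ j ∈ s, (1 + x j)) - 1) + x a := by ring
    rw [key]
    have h1 : ‖(1 : ℂ) + x a‖ ≤ 1 + ‖x a‖ := (norm_add_le _ _).trans (by simp)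
    have step : ∀ i ∈ s, (1:ℝ) ≤ 1 + ‖x i‖ := fun i _ => by linarith [norm_nonneg (x i)]
    have h2 : (1:ℝ) ≤ ∏ j ∈ s, (1 + ‖x j‖) := by
      calc (1:ℝ) = ∏ _j ∈ s, (1:ℝ) := (Finset.prod_const_one).symm
        _ ≤ ∏ j ∈ s, (1 + ‖x j‖) := Finset.prod_le_prod (fun i _ => zero_le_one) step
    calc ‖(1 + x a) * ((∏ j ∈ s, (1 + x j)) - 1) + x a‖
        ≤ ‖(1 + x a)‖ * ‖(∏ j ∈ s, (1 + x j)) - 1‖ + ‖x a‖ := by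
          refine (norm_add_le _ _).trans ?_
          rw [norm_mul]
      _ ≤ (1 + ‖x a‖) * ((∏ j ∈ s, (1 + ‖x j‖)) - 1) + ‖x a‖ := by
          have := norm_nonneg (x a)
          have := norm_nonneg ((∏ j ∈ s, (1 + x j)) - 1)
          nlinarith [ih]
      _ = (1 + ‖x a‖) * (∏ j ∈ s, (1 + ‖x j‖)) - 1 := by ring

/-- Master multipliability lemma. -/
lemma mult_one_add {x : ℕ → ℂ} {ρ : ℝ} (hρ : ρ < 1) (hb : ∀ j, ‖x j‖ ≤ ρ)
    (hs : Summable fun j => ‖x j‖) : Multipliable (fun j => 1 + x j) := by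
  have hρ0 : 0 ≤ ρ := le_trans (norm_nonneg _) (hb 0)
  have hfn : ∀ (_ : Unit) (j : ℕ), (1 : ℂ) + x j ≠ 0 := by
    intro _ j h
    have hx : x j = -1 := by linear_combination h
    have := hb j
    rw [hx] at this
    simp at this
    linarith
  have hf : ∀ (_ : Unit), Summable fun j => Complex.log (1 + x j) := by
    intro _
    refine Summable.of_norm_bounded (g := fun j => (ρ * (1 - ρ)⁻¹ / 2 + 1) * ‖x j‖)
      (hs.mul_left _) (fun j => ?_)
    have hxj : ‖x j‖ < 1 := lt_of_le_of_lt (hb j) hρ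
    have hlog := Complex.norm_log_one_add_le hxj
    have hinv : (1 - ‖x j‖)⁻¹ ≤ (1 - ρ)⁻¹ := by
      apply inv_anti₀
      · linarith
      · linarith [hb j]
    have h0 : (0:ℝ) ≤ ‖x j‖ := norm_nonneg _
    have h1 : (0:ℝ) ≤ (1 - ‖x j‖)⁻¹ := inv_nonneg.2 (by linarith)
    have h2 : (0:ℝ) ≤ (1 - ρ)⁻¹ := inv_nonneg.2 (by linarith)
    show ‖Complex.log (1 + x j)‖ ≤ (ρ * (1 - ρ)⁻¹ / 2 + 1) * ‖x j‖
    have hA : ‖x j‖ * (1 - ‖x j‖)⁻¹ ≤ ρ * (1 - ρ)⁻¹ := mul_le_mul (hb j) hinv h1 hρ0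
    nlinarith [mul_le_mul_of_nonneg_left hA h0]
  exact Complex.multipliable_of_summable_log (hf ())

lemma mult_pow {u : ℂ} (hu : ‖u‖ < 1) {m : ℕ} (hm : 1 ≤ m) :
    Multipliable (fun j : ℕ => 1 + u ^ (m + j)) := by
  refine mult_one_add hu (fun j => ?_) ?_
  · rw [norm_pow]
    calc ‖u‖ ^ (m + j) ≤ ‖u‖ ^ 1 := pow_le_pow_of_le_one (norm_nonneg u) hu.le (by omega)
      _ = ‖u‖ := pow_one _
  · have h := (summable_geometric_of_lt_one (norm_nonneg u) hu).mul_left (‖u‖ ^ m)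
    simpa [norm_pow, pow_add] using h

lemma Pinf_peel {u : ℂ} (hu : ‖u‖ < 1) {m : ℕ} (hm : 1 ≤ m) :
    Pinf u m = (1 + u ^ m) * Pinf u (m + 1) := by
  have hshift : Multipliable (fun j : ℕ => 1 + u ^ (m + (j + 1))) :=
    (mult_pow hu (Nat.le_add_left 1 m)).congr fun j => by
      rw [show m + 1 + j = m + (j + 1) by omega]
  rw [Pinf, tprod_eq_zero_mul' (f := fun j : ℕ => 1 + u ^ (m + j)) hshift, add_zero]
  congr 1
  rw [Pinf]
  exact tprod_congr fun j => by rw [show m + (j + 1) = m + 1 + j by omega]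

/-- Master bound for the tprod. -/
lemma tprod_one_add_sub_one_le {x : ℕ → ℂ} {r ε : ℝ} (hr0 : 0 ≤ r) (hr1 : r < 1)
    (hε : 0 ≤ ε) (hx : ∀ j, ‖x j‖ ≤ ε * r ^ j) (hm : Multipliable (fun j => 1 + x j)) :
    ‖(∏' j : ℕ, (1 + x j)) - 1‖ ≤ Real.exp (ε * (1 - r)⁻¹) - 1 := by
  have hp := hm.hasProd
  have ht : Tendsto (fun s : Finset ℕ => ‖(∏ j ∈ s, (1 + x j)) - 1‖) atTop
      (𝓝 ‖(∏' j : ℕ, (1 + x j)) - 1‖) := (hp.sub tendsto_const_nhds).norm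
  refine le_of_tendsto ht (Filter.Eventually.of_forall fun s => ?_)
  have hsum : ∑ j ∈ s, ‖x j‖ ≤ ε * (1 - r)⁻¹ := by
    calc ∑ j ∈ s, ‖x j‖ ≤ ∑ j ∈ s, ε * r ^ j := Finset.sum_le_sum fun j _ => hx j
      _ ≤ ∑' j : ℕ, ε * r ^ j := Summable.sum_le_tsum s
          (fun j _ => mul_nonneg hε (pow_nonneg hr0 _))
          ((summable_geometric_of_lt_one hr0 hr1).mul_left ε)
      _ = ε * (1 - r)⁻¹ := by rw [tsum_mul_left, tsum_geometric_of_lt_one hr0 hr1]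
  calc ‖(∏ j ∈ s, (1 + x j)) - 1‖ ≤ (∏ j ∈ s, (1 + ‖x j‖)) - 1 :=
        norm_finprod_one_add_sub_one_le x s
    _ ≤ Real.exp (∑ j ∈ s, ‖x j‖) - 1 := by
        have := finprod_one_add_le (fun j => ‖x j‖) (fun j => norm_nonneg _) s
        linarith
    _ ≤ Real.exp (ε * (1 - r)⁻¹) - 1 := by
        have := Real.exp_le_exp.2 hsum
        linarith

lemma Pinf_sub_one_le {u : ℂ} (hu : ‖u‖ < 1) {m : ℕ} (hm : 1 ≤ m) :
    ‖Pinf u m - 1‖ ≤ Real.exp (‖u‖ ^ m * (1 - ‖u‖)⁻¹) - 1 := by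
  refine tprod_one_add_sub_one_le (norm_nonneg u) hu (by positivity)
    (fun j => ?_) (mult_pow hu hm)
  rw [norm_pow, pow_add]

lemma Pinf_norm_le {u : ℂ} (hu : ‖u‖ < 1) {m : ℕ} (hm : 1 ≤ m) :
    ‖Pinf u m‖ ≤ Real.exp ((1 - ‖u‖)⁻¹) := by
  have h1 := Pinf_sub_one_le hu hm
  have h2 : ‖u‖ ^ m * (1 - ‖u‖)⁻¹ ≤ 1 * (1 - ‖u‖)⁻¹ := by
    apply mul_le_mul_of_nonneg_right
    · exact pow_le_one₀ (norm_nonneg _) hu.le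
    · exact inv_nonneg.2 (by linarith)
  have h3 := Real.exp_le_exp.2 h2
  have h4 : ‖Pinf u m‖ ≤ ‖Pinf u m - 1‖ + 1 := by
    have := norm_add_le (Pinf u m - 1) 1
    simpa using this
  rw [one_mul] at h3
  linarith

lemma Pinf_tendsto {u : ℂ} (hu : ‖u‖ < 1) :
    Tendsto (fun n : ℕ => Pinf u (n + 1)) atTop (𝓝 1) := by
  rw [tendsto_iff_norm_sub_tendsto_zero]
  have hg : Tendsto (fun n : ℕ => Real.exp (‖u‖ ^ (n + 1) * (1 - ‖u‖)⁻¹) - 1) atTop (𝓝 0) := by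
    have h1 : Tendsto (fun n : ℕ => ‖u‖ ^ (n + 1) * (1 - ‖u‖)⁻¹) atTop (𝓝 0) := by
      have h0 := (tendsto_pow_atTop_nhds_zero_of_lt_one (norm_nonneg u) hu).mul_const (1 - ‖u‖)⁻¹
      rw [zero_mul] at h0
      exact h0.comp (tendsto_add_atTop_nat 1)
    have h2 := (Real.continuous_exp.tendsto 0).comp h1
    rw [Real.exp_zero] at h2
    simpa using h2.sub_const 1
  exact squeeze_zero (fun n => norm_nonneg _)
    (fun n => Pinf_sub_one_le hu (Nat.le_add_left 1 n)) hg

lemma qPoch_norm_le {q : ℂ} (hq : ‖q‖ < 1) (n : ℕ) :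
    ‖qPoch (q ^ 3) (-q ^ 3) n‖ ≤ Real.exp ((1 - ‖q‖)⁻¹) := by
  rw [qPoch, norm_prod]
  calc ∏ j ∈ Finset.range n, ‖1 - (-q ^ 3) * (q ^ 3) ^ j‖
      ≤ ∏ j ∈ Finset.range n, (1 + ‖q‖ ^ j) := by
        apply Finset.prod_le_prod (fun i _ => norm_nonneg _)
        intro j _
        have h1 : (1 : ℂ) - (-q ^ 3) * (q ^ 3) ^ j = 1 + (q ^ 3) ^ (j + 1) := by ring
        rw [h1]
        refine (norm_add_le _ _).trans ?_
        have : ‖(q ^ 3) ^ (j + 1)‖ ≤ ‖q‖ ^ j := by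
          rw [norm_pow, norm_pow, ← pow_mul]
          exact pow_le_pow_of_le_one (norm_nonneg _) hq.le (by omega)
        simpa using this
    _ ≤ Real.exp (∑ j ∈ Finset.range n, ‖q‖ ^ j) :=
        finprod_one_add_le _ (fun j => by positivity) _
    _ ≤ Real.exp ((1 - ‖q‖)⁻¹) := by
        apply Real.exp_le_exp.2
        calc ∑ j ∈ Finset.range n, ‖q‖ ^ j ≤ ∑' j : ℕ, ‖q‖ ^ j :=
              Summable.sum_le_tsum _ (fun j _ => by positivity)
                (summable_geometric_of_lt_one (norm_nonneg _) hq)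
          _ = (1 - ‖q‖)⁻¹ := tsum_geometric_of_lt_one (norm_nonneg _) hq

theorem thmAp_c (q : ℂ) (hq : ‖q‖ < 1) :
    ∑' n : ℕ, q ^ (n + 1) * qPochInf q (-q ^ (n + 1)) *
        (qPochInf q (-q ^ (n + 2))) ^ 2 * qPoch (q ^ 3) (-q ^ 3) n
      = (1 / 3) * ((qPochInf q (-q)) ^ 3 - qPochInf (q ^ 3) (-q ^ 3)) := by
  have hr : ‖q‖ < 1 := hq
  have hr3 : ‖q ^ 3‖ < 1 := by
    rw [norm_pow]
    exact pow_lt_one₀ (norm_nonneg _) hr (by norm_num)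
  set C : ℝ := Real.exp ((1 - ‖q‖)⁻¹) with hC
  set F : ℕ → ℂ := fun n =>
    (1 / 3) * qPoch (q ^ 3) (-q ^ 3) n * ((Pinf q (n + 1)) ^ 3 - Pinf (q ^ 3) (n + 1)) with hF
  -- the summand telescopes
  have key : ∀ n : ℕ, q ^ (n + 1) * qPochInf q (-q ^ (n + 1)) *
      (qPochInf q (-q ^ (n + 2))) ^ 2 * qPoch (q ^ 3) (-q ^ 3) n = F n - F (n + 1) := by
    intro n
    have hA : Pinf q (n + 1) = (1 + q ^ (n + 1)) * Pinf q (n + 2) :=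
      Pinf_peel hr (Nat.le_add_left 1 n)
    have hB : Pinf (q ^ 3) (n + 1) = (1 + (q ^ 3) ^ (n + 1)) * Pinf (q ^ 3) (n + 2) :=
      Pinf_peel hr3 (Nat.le_add_left 1 n)
    have hc : qPoch (q ^ 3) (-q ^ 3) (n + 1)
        = qPoch (q ^ 3) (-q ^ 3) n * (1 + (q ^ 3) ^ (n + 1)) := by
      rw [qPoch, qPoch, Finset.prod_range_succ]
      congr 1
      ring
    have hx : (q ^ 3) ^ (n + 1) = (q ^ (n + 1)) ^ 3 := by
      rw [← pow_mul, ← pow_mul, mul_comm]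
    rw [qPochInf_eq, qPochInf_eq]
    simp only [hF, hc, hA, hB, hx]
    ring
  -- summability
  have hsum : Summable (fun n : ℕ => q ^ (n + 1) * qPochInf q (-q ^ (n + 1)) *
      (qPochInf q (-q ^ (n + 2))) ^ 2 * qPoch (q ^ 3) (-q ^ 3) n) := by
    refine Summable.of_norm_bounded (g := fun n => (C ^ 4) * ‖q‖ ^ n)
      ((summable_geometric_of_lt_one (norm_nonneg _) hr).mul_left _) (fun n => ?_)
    rw [qPochInf_eq, qPochInf_eq]
    have h1 : ‖Pinf q (n + 1)‖ ≤ C := Pinf_norm_le hr (Nat.le_add_left 1 n)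
    have h2 : ‖Pinf q (n + 2)‖ ≤ C := Pinf_norm_le hr (Nat.le_add_left 1 (n + 1))
    have h3 : ‖qPoch (q ^ 3) (-q ^ 3) n‖ ≤ C := qPoch_norm_le hr n
    have h4 : ‖q‖ ^ (n + 1) ≤ ‖q‖ ^ n :=
      pow_le_pow_of_le_one (norm_nonneg _) hr.le (by omega)
    have h5 : ‖Pinf q (n + 2)‖ ^ 2 ≤ C ^ 2 := by
      apply pow_le_pow_left₀ (norm_nonneg _) h2
    calc ‖q ^ (n + 1) * Pinf q (n + 1) * (Pinf q (n + 2)) ^ 2 * qPoch (q ^ 3) (-q ^ 3) n‖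
        = ‖q‖ ^ (n + 1) * ‖Pinf q (n + 1)‖ * ‖Pinf q (n + 2)‖ ^ 2
            * ‖qPoch (q ^ 3) (-q ^ 3) n‖ := by
          simp [norm_mul, norm_pow]
      _ ≤ ‖q‖ ^ n * C * C ^ 2 * C := by gcongr <;> positivity
      _ = C ^ 4 * ‖q‖ ^ n := by ring
  -- F tends to zero
  have hFt : Tendsto F atTop (𝓝 0) := by
    have hD : Tendsto (fun n : ℕ => (Pinf q (n + 1)) ^ 3 - Pinf (q ^ 3) (n + 1)) atTop (𝓝 0) := by
      have := ((Pinf_tendsto hr).pow 3).sub (Pinf_tendsto hr3)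
      simpa using this
    rw [tendsto_zero_iff_norm_tendsto_zero]
    have hg : Tendsto (fun n : ℕ =>
        (1 / 3) * C * ‖(Pinf q (n + 1)) ^ 3 - Pinf (q ^ 3) (n + 1)‖) atTop (𝓝 0) := by
      have := hD.norm.const_mul ((1 / 3) * C)
      simpa using this
    refine squeeze_zero (fun n => norm_nonneg _) (fun n => ?_) hg
    simp only [hF]
    rw [norm_mul, norm_mul]
    have hn13 : ‖(1 / 3 : ℂ)‖ = 1 / 3 := by norm_num
    rw [hn13]
    rw [mul_assoc, mul_assoc]
    apply mul_le_mul_of_nonneg_left _ (by norm_num)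
    exact mul_le_mul_of_nonneg_right (qPoch_norm_le hr n) (norm_nonneg _)
  -- conclude
  have hF0 : F 0 = (1 / 3) * ((qPochInf q (-q)) ^ 3 - qPochInf (q ^ 3) (-q ^ 3)) := by
    have e1 : qPochInf q (-q) = Pinf q 1 := by
      have := qPochInf_eq q 1
      rwa [pow_one] at this
    have e2 : qPochInf (q ^ 3) (-q ^ 3) = Pinf (q ^ 3) 1 := by
      have := qPochInf_eq (q ^ 3) 1
      rwa [pow_one] at this
    simp only [hF, e1, e2, qPoch]
    simp
  rw [← hF0]
  apply HasSum.tsum_eq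
  rw [hsum.hasSum_iff_tendsto_nat]
  have hps : ∀ n : ℕ, (∑ i ∈ Finset.range n, (q ^ (i + 1) * qPochInf q (-q ^ (i + 1)) *
      (qPochInf q (-q ^ (i + 2))) ^ 2 * qPoch (q ^ 3) (-q ^ 3) i)) = F 0 - F n := by
    intro n
    rw [Finset.sum_congr rfl (fun i _ => key i)]
    exact Finset.sum_range_sub' F n
  simp only [hps]
  have := hFt.const_sub (F 0)
  simpa using this
end

section
/- For every complex number q with |q| < 1, ∑_{n≥1} q^n (q^n; q)_∞ (q^3; q^3)_{n−1} / [ (−q^{n+1}; q)_∞ (−q^3; q^3)_n ] = (1/2)·( (q^3; q^3)_∞/(−q^3; q^3)_∞ − (q; q)_∞/(−q; q)_∞ ). -/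
open Complex Filter Finset Topology

set_option maxHeartbeats 1000000

namespace ThmA2Aux

lemma abs_aq_lt {q a : ℂ} (hq : ‖q‖ < 1) (ha : ‖a‖ < 1) (j : ℕ) :
    ‖(a * q ^ j)‖ < 1 := by
  rw [norm_mul, norm_pow]
  have h1 : ‖q‖ ^ j ≤ 1 := pow_le_one₀ (norm_nonneg q) hq.le
  nlinarith [norm_nonneg a, pow_nonneg (norm_nonneg q) j]

lemma factor_ne_zero {q a : ℂ} (hq : ‖q‖ < 1) (ha : ‖a‖ < 1) (j : ℕ) :
    1 - a * q ^ j ≠ 0 := by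
  intro h
  have h1 : a * q ^ j = 1 := by linear_combination -h
  have := abs_aq_lt hq ha j
  rw [h1] at this
  simp at this

lemma one_add_ne_zero {z : ℂ} (h : ‖z‖ < 1) : 1 + z ≠ 0 := by
  intro h0
  have h1 : z = -1 := by linear_combination h0
  rw [h1] at h
  simp at h

lemma log_bound {q a : ℂ} (hq : ‖q‖ < 1) (ha : ‖a‖ < 1) (j : ℕ) :
    ‖Complex.log (1 - a * q ^ j)‖ ≤
      (‖a‖ ^ 2 * (1 - ‖a‖)⁻¹ / 2 + ‖a‖) * ‖q‖ ^ j := by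
  have hz : ‖-(a * q ^ j)‖ < 1 := by
    rw [norm_neg]; exact abs_aq_lt hq ha j
  have h0 : (1 : ℂ) - a * q ^ j = 1 + -(a * q ^ j) := by ring
  rw [h0]
  refine (Complex.norm_log_one_add_le hz).trans ?_
  have hzn : ‖-(a * q ^ j)‖ = ‖a‖ * ‖q‖ ^ j := by
    rw [norm_neg, norm_mul, norm_pow]
  rw [hzn]
  set A := ‖a‖ with hA
  set R := ‖q‖ ^ j with hR
  have hA0 : 0 ≤ A := norm_nonneg a
  have hR0 : 0 ≤ R := pow_nonneg (norm_nonneg q) j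
  have hR1 : R ≤ 1 := pow_le_one₀ (norm_nonneg q) hq.le
  have hx : A * R ≤ A := by nlinarith
  have hxA : A * R < 1 := lt_of_le_of_lt hx ha
  have hu0 : 0 < 1 - A * R := by linarith
  have hv0 : 0 < 1 - A := by linarith
  have huv : (1 - A * R)⁻¹ ≤ (1 - A)⁻¹ := by
    apply inv_anti₀ hv0; linarith
  have hu0' : 0 ≤ (1 - A * R)⁻¹ := by positivity
  have hv0' : 0 ≤ (1 - A)⁻¹ := by positivity
  have key : R * (1 - A * R)⁻¹ ≤ (1 - A)⁻¹ := by
    calc R * (1 - A * R)⁻¹ ≤ 1 * (1 - A * R)⁻¹ := by nlinarith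
      _ ≤ (1 - A)⁻¹ := by simpa using huv
  have key2 : A ^ 2 * R * (R * (1 - A * R)⁻¹) ≤ A ^ 2 * R * (1 - A)⁻¹ :=
    mul_le_mul_of_nonneg_left key (by positivity)
  nlinarith [key2]

lemma summable_log {q a : ℂ} (hq : ‖q‖ < 1) (ha : ‖a‖ < 1) :
    Summable fun j : ℕ => Complex.log (1 - a * q ^ j) := by
  refine Summable.of_norm_bounded
    (((summable_geometric_of_lt_one (norm_nonneg q) hq)).mul_left
      (‖a‖ ^ 2 * (1 - ‖a‖)⁻¹ / 2 + ‖a‖)) ?_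
  exact log_bound hq ha

lemma qPochInf_eq_exp {q a : ℂ} (hq : ‖q‖ < 1) (ha : ‖a‖ < 1) :
    qPochInf q a = Complex.exp (∑' j : ℕ, Complex.log (1 - a * q ^ j)) := by
  have := Complex.cexp_tsum_eq_tprod (f := fun j : ℕ => 1 - a * q ^ j)
    (fun j => factor_ne_zero hq ha j) (summable_log hq ha)
  exact this.symm

lemma qPochInf_ne_zero {q a : ℂ} (hq : ‖q‖ < 1) (ha : ‖a‖ < 1) :
    qPochInf q a ≠ 0 := by
  rw [qPochInf_eq_exp hq ha]; exact Complex.exp_ne_zero _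

lemma hasProd_qPochInf {q a : ℂ} (hq : ‖q‖ < 1) (ha : ‖a‖ < 1) :
    HasProd (fun j : ℕ => 1 - a * q ^ j) (qPochInf q a) :=
  by rw [qPochInf_eq_exp hq ha]; exact Complex.hasProd_of_hasSum_log (f := fun j : ℕ => 1 - a * q ^ j)
        (fun j => factor_ne_zero hq ha j) (summable_log hq ha).hasSum

lemma tendsto_qPoch {q a : ℂ} (hq : ‖q‖ < 1) (ha : ‖a‖ < 1) :
    Tendsto (fun n => qPoch q a n) atTop (𝓝 (qPochInf q a)) := by
  simpa [qPoch] using (hasProd_qPochInf hq ha).tendsto_prod_nat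

lemma qPoch_ne_zero {q a : ℂ} (hq : ‖q‖ < 1) (ha : ‖a‖ < 1) (n : ℕ) :
    qPoch q a n ≠ 0 := by
  rw [qPoch]
  exact Finset.prod_ne_zero_iff.2 fun j _ => factor_ne_zero hq ha j

lemma abs_mul_lt {q a : ℂ} (hq : ‖q‖ < 1) (ha : ‖a‖ < 1) :
    ‖(a * q)‖ < 1 := by
  simpa using abs_aq_lt hq ha 1

lemma qPochInf_peel {q a : ℂ} (hq : ‖q‖ < 1) (ha : ‖a‖ < 1) :
    qPochInf q a = (1 - a) * qPochInf q (a * q) := by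
  have hm : Multipliable fun n : ℕ => 1 - a * q ^ (n + 1) := by
    have := (hasProd_qPochInf hq (abs_mul_lt hq ha)).multipliable
    refine this.congr fun n => ?_
    ring
  have h := tprod_eq_zero_mul' (f := fun n : ℕ => 1 - a * q ^ n) hm
  rw [qPochInf, h]
  simp only [pow_zero, mul_one]
  congr 1
  rw [qPochInf]
  exact tprod_congr fun n => by ring

lemma qPochInf_split {q a : ℂ} (hq : ‖q‖ < 1) (ha : ‖a‖ < 1) (n : ℕ) :
    qPochInf q a = qPoch q a n * qPochInf q (a * q ^ n) := by
  induction n with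
  | zero => simp [qPoch]
  | succ n ih =>
      have han : ‖(a * q ^ n)‖ < 1 := abs_aq_lt hq ha n
      have h2 : a * q ^ n * q = a * q ^ (n + 1) := by ring
      rw [ih, qPochInf_peel hq han, h2]
      simp only [qPoch, Finset.prod_range_succ]
      ring

/-- Uniform bound constant. -/
noncomputable def Dq (q : ℂ) : ℝ :=
  (‖q‖ ^ 2 * (1 - ‖q‖)⁻¹ / 2 + ‖q‖) * (1 - ‖q‖)⁻¹

lemma norm_tsum_log_le {q a : ℂ} (hq : ‖q‖ < 1) (ha : ‖a‖ ≤ ‖q‖) :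
    ‖∑' j : ℕ, Complex.log (1 - a * q ^ j)‖ ≤ Dq q := by
  have ha1 : ‖a‖ < 1 := lt_of_le_of_lt ha hq
  have hb := log_bound hq ha1
  have hgeom : Summable fun j : ℕ =>
      (‖a‖ ^ 2 * (1 - ‖a‖)⁻¹ / 2 + ‖a‖) * ‖q‖ ^ j :=
    (summable_geometric_of_lt_one (norm_nonneg q) hq).mul_left _
  have hs : Summable fun j : ℕ => ‖Complex.log (1 - a * q ^ j)‖ :=
    Summable.of_nonneg_of_le (fun _ => norm_nonneg _) hb hgeom
  calc ‖∑' j : ℕ, Complex.log (1 - a * q ^ j)‖ ≤ ∑' j : ℕ, ‖Complex.log (1 - a * q ^ j)‖ :=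
        norm_tsum_le_tsum_norm hs
    _ ≤ ∑' j : ℕ, (‖a‖ ^ 2 * (1 - ‖a‖)⁻¹ / 2 + ‖a‖)
        * ‖q‖ ^ j := Summable.tsum_le_tsum hb hs hgeom
    _ = (‖a‖ ^ 2 * (1 - ‖a‖)⁻¹ / 2 + ‖a‖)
        * (1 - ‖q‖)⁻¹ := by
        rw [tsum_mul_left, tsum_geometric_of_lt_one (norm_nonneg q) hq]
    _ ≤ Dq q := by
        rw [Dq]
        have h1 : 0 ≤ (1 - ‖q‖)⁻¹ := inv_nonneg.2 (by linarith)
        have h2 : ‖a‖ ^ 2 ≤ ‖q‖ ^ 2 := by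
          have := norm_nonneg a; nlinarith
        have h3 : (1 - ‖a‖)⁻¹ ≤ (1 - ‖q‖)⁻¹ :=
          inv_anti₀ (by linarith) (by linarith)
        have h4 : 0 ≤ (1 - ‖a‖)⁻¹ := inv_nonneg.2 (by linarith)
        gcongr

lemma abs_qPochInf_bounds {q a : ℂ} (hq : ‖q‖ < 1)
    (ha : ‖a‖ ≤ ‖q‖) :
    Real.exp (-Dq q) ≤ ‖(qPochInf q a)‖ ∧
      ‖(qPochInf q a)‖ ≤ Real.exp (Dq q) := by
  have ha1 : ‖a‖ < 1 := lt_of_le_of_lt ha hq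
  rw [qPochInf_eq_exp hq ha1, Complex.norm_exp]
  have h := norm_tsum_log_le hq ha
  have hre : |(∑' j : ℕ, Complex.log (1 - a * q ^ j)).re|
      ≤ ‖∑' j : ℕ, Complex.log (1 - a * q ^ j)‖ := by
    exact Complex.abs_re_le_norm _
  have h2 := abs_le.1 (hre.trans h)
  exact ⟨Real.exp_le_exp.2 h2.1, Real.exp_le_exp.2 h2.2⟩

lemma abs_qPoch_bounds {q a : ℂ} (hq : ‖q‖ < 1)
    (ha : ‖a‖ ≤ ‖q‖) (n : ℕ) :
    Real.exp (-(2 * Dq q)) ≤ ‖(qPoch q a n)‖ ∧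
      ‖(qPoch q a n)‖ ≤ Real.exp (2 * Dq q) := by
  have ha1 : ‖a‖ < 1 := lt_of_le_of_lt ha hq
  have han : ‖(a * q ^ n)‖ ≤ ‖q‖ := by
    rw [norm_mul, norm_pow]
    have h1 : ‖q‖ ^ n ≤ 1 := pow_le_one₀ (norm_nonneg q) hq.le
    nlinarith [norm_nonneg a, pow_nonneg (norm_nonneg q) n,
      norm_nonneg q]
  have hs := qPochInf_split hq ha1 n
  have htail := abs_qPochInf_bounds hq han
  have htop := abs_qPochInf_bounds hq ha
  have htail0 : 0 < ‖(qPochInf q (a * q ^ n))‖ :=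
    lt_of_lt_of_le (Real.exp_pos _) htail.1
  have heq : ‖(qPoch q a n)‖
      = ‖(qPochInf q a)‖ / ‖(qPochInf q (a * q ^ n))‖ := by
    rw [hs, norm_mul, mul_div_assoc, div_self (ne_of_gt htail0), mul_one]
  rw [heq]
  constructor
  · rw [show -(2 * Dq q) = -Dq q - Dq q by ring, Real.exp_sub]
    exact div_le_div₀ (norm_nonneg _) htop.1 htail0 htail.2
  · rw [show 2 * Dq q = Dq q - -Dq q by ring, Real.exp_sub]
    exact div_le_div₀ (Real.exp_pos _).le htop.2 (Real.exp_pos _) htail.1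

lemma alg {x P M A B : ℂ} (hM : M ≠ 0) (hB : B ≠ 0) (h1x : 1 + x ≠ 0) (h1x3 : 1 + x ^ 3 ≠ 0) :
    x * ((1 - x) * P) * A / (M * (B * (1 + x ^ 3)))
      = (P * (A * (1 - x ^ 3)) / (M * (B * (1 + x ^ 3)))
          - (1 - x) * P * A / ((1 + x) * M * B)) / 2 := by
  have hd1 : M * (B * (1 + x ^ 3)) ≠ 0 := mul_ne_zero hM (mul_ne_zero hB h1x3)
  have hd2 : (1 + x) * M * B ≠ 0 := mul_ne_zero (mul_ne_zero h1x hM) hB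
  rw [div_sub_div _ _ hd1 hd2, div_div, div_eq_div_iff hd1 (by
    exact mul_ne_zero (mul_ne_zero hd1 hd2) two_ne_zero)]
  ring

/-- The summand. -/
noncomputable def tfun (q : ℂ) (n : ℕ) : ℂ :=
  q ^ (n + 1) * qPochInf q (q ^ (n + 1)) * qPoch (q ^ 3) (q ^ 3) n /
    (qPochInf q (-q ^ (n + 2)) * qPoch (q ^ 3) (-q ^ 3) (n + 1))

/-- The telescoping function. -/
noncomputable def Ffun (q : ℂ) (n : ℕ) : ℂ :=
  qPochInf q (q ^ (n + 1)) * qPoch (q ^ 3) (q ^ 3) n /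
    (qPochInf q (-q ^ (n + 1)) * qPoch (q ^ 3) (-q ^ 3) n)

lemma abs_pow_le {q : ℂ} (hq : ‖q‖ < 1) {m : ℕ} (hm : 1 ≤ m) :
    ‖(q ^ m)‖ ≤ ‖q‖ := by
  rw [norm_pow]
  exact pow_le_of_le_one (norm_nonneg q) hq.le (by omega)

lemma abs_pow_lt {q : ℂ} (hq : ‖q‖ < 1) {m : ℕ} (hm : 1 ≤ m) :
    ‖(q ^ m)‖ < 1 := lt_of_le_of_lt (abs_pow_le hq hm) hq

lemma key_step {q : ℂ} (hq : ‖q‖ < 1) (n : ℕ) :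
    tfun q n = (Ffun q (n + 1) - Ffun q n) / 2 := by
  have hq3 : ‖(q ^ 3)‖ < 1 := abs_pow_lt hq (by norm_num)
  have hx : ‖(q ^ (n + 1))‖ < 1 := abs_pow_lt hq (by omega)
  have hx2 : ‖(q ^ (n + 2))‖ < 1 := abs_pow_lt hq (by omega)
  have hnx : ‖(-q ^ (n + 1))‖ < 1 := by simpa using hx
  have hnx2 : ‖(-q ^ (n + 2))‖ < 1 := by simpa using hx2
  have hnq3 : ‖(-q ^ 3)‖ < 1 := by simpa using hq3
  have e1 : qPochInf q (q ^ (n + 1)) = (1 - q ^ (n + 1)) * qPochInf q (q ^ (n + 2)) := by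
    rw [qPochInf_peel hq hx, show q ^ (n + 1) * q = q ^ (n + 2) from by ring]
  have e2 : qPochInf q (-q ^ (n + 1)) = (1 + q ^ (n + 1)) * qPochInf q (-q ^ (n + 2)) := by
    rw [qPochInf_peel hq hnx, show -q ^ (n + 1) * q = -q ^ (n + 2) from by ring]
    ring
  have e3 : qPoch (q ^ 3) (q ^ 3) (n + 1)
      = qPoch (q ^ 3) (q ^ 3) n * (1 - (q ^ (n + 1)) ^ 3) := by
    simp only [qPoch, Finset.prod_range_succ]
    ring
  have e4 : qPoch (q ^ 3) (-q ^ 3) (n + 1)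
      = qPoch (q ^ 3) (-q ^ 3) n * (1 + (q ^ (n + 1)) ^ 3) := by
    simp only [qPoch, Finset.prod_range_succ]
    ring
  have hM : qPochInf q (-q ^ (n + 2)) ≠ 0 := qPochInf_ne_zero hq hnx2
  have hB : qPoch (q ^ 3) (-q ^ 3) n ≠ 0 := qPoch_ne_zero hq3 hnq3 n
  have h1x : (1 : ℂ) + q ^ (n + 1) ≠ 0 := one_add_ne_zero hx
  have h1x3 : (1 : ℂ) + (q ^ (n + 1)) ^ 3 ≠ 0 := by
    apply one_add_ne_zero
    rw [norm_pow]
    exact pow_lt_one₀ (norm_nonneg _) hx (by norm_num)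
  rw [tfun, Ffun, Ffun, show n + 1 + 1 = n + 2 from rfl, e1, e2, e3, e4]
  exact alg hM hB h1x h1x3

lemma tendsto_tail {q a : ℂ} (hq : ‖q‖ < 1) (ha : ‖a‖ < 1) :
    Tendsto (fun n => qPochInf q (a * q ^ n)) atTop (𝓝 1) := by
  have hrep : ∀ n : ℕ, qPochInf q (a * q ^ n) = qPochInf q a / qPoch q a n := by
    intro n
    rw [qPochInf_split hq ha n, mul_comm (qPoch q a n), mul_div_assoc,
      div_self (qPoch_ne_zero hq ha n), mul_one]
  simp only [hrep]
  have h := Tendsto.div (tendsto_const_nhds (x := qPochInf q a) (f := atTop))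
    (tendsto_qPoch hq ha) (qPochInf_ne_zero hq ha)
  simpa [div_self (qPochInf_ne_zero hq ha), Pi.div_def] using h

lemma tendsto_top {q : ℂ} (hq : ‖q‖ < 1) :
    Tendsto (fun n => qPochInf q (q ^ (n + 1))) atTop (𝓝 1) := by
  have h := tendsto_tail hq hq
  refine h.congr fun n => ?_
  rw [show q * q ^ n = q ^ (n + 1) from by ring]

lemma tendsto_bot {q : ℂ} (hq : ‖q‖ < 1) :
    Tendsto (fun n => qPochInf q (-q ^ (n + 1))) atTop (𝓝 1) := by
  have hnq : ‖(-q)‖ < 1 := by simpa using hq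
  have h := tendsto_tail hq hnq
  refine h.congr fun n => ?_
  rw [show -q * q ^ n = -q ^ (n + 1) from by ring]

lemma tendsto_Ffun {q : ℂ} (hq : ‖q‖ < 1) :
    Tendsto (Ffun q) atTop
      (𝓝 (qPochInf (q ^ 3) (q ^ 3) / qPochInf (q ^ 3) (-q ^ 3))) := by
  have hq3 : ‖(q ^ 3)‖ < 1 := abs_pow_lt hq (by norm_num)
  have hnq3 : ‖(-q ^ 3)‖ < 1 := by simpa using hq3
  have hA := tendsto_qPoch hq3 hq3
  have hB := tendsto_qPoch hq3 hnq3
  have hM3 : qPochInf (q ^ 3) (-q ^ 3) ≠ 0 := qPochInf_ne_zero hq3 hnq3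
  have h := Tendsto.div ((tendsto_top hq).mul hA) ((tendsto_bot hq).mul hB)
    (by simpa using hM3)
  simp only [Pi.div_def, one_mul] at h
  exact h

lemma norm_tfun_le {q : ℂ} (hq : ‖q‖ < 1) (n : ℕ) :
    ‖tfun q n‖ ≤ ‖q‖ * Real.exp (Dq q) * Real.exp (2 * Dq (q ^ 3))
        / (Real.exp (-Dq q) * Real.exp (-(2 * Dq (q ^ 3)))) * ‖q‖ ^ n := by
  have hq3 : ‖(q ^ 3)‖ < 1 := abs_pow_lt hq (by norm_num)
  have ha1 : ‖(q ^ (n + 1))‖ ≤ ‖q‖ := abs_pow_le hq (by omega)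
  have ha2 : ‖(-q ^ (n + 2))‖ ≤ ‖q‖ := by
    simpa using abs_pow_le hq (show 1 ≤ n + 2 by omega)
  have ha3 : ‖(-q ^ 3 : ℂ)‖ ≤ ‖(q ^ 3)‖ := by simp
  have u1 := (abs_qPochInf_bounds hq ha1).2
  have u2 := (abs_qPoch_bounds hq3 le_rfl n).2
  have l1 := (abs_qPochInf_bounds hq ha2).1
  have l2 := (abs_qPoch_bounds hq3 ha3 (n + 1)).1
  have l1' : 0 < ‖(qPochInf q (-q ^ (n + 2)))‖ :=
    lt_of_lt_of_le (Real.exp_pos _) l1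
  have l2' : 0 < ‖(qPoch (q ^ 3) (-q ^ 3) (n + 1))‖ :=
    lt_of_lt_of_le (Real.exp_pos _) l2
  rw [tfun, norm_div, norm_mul, norm_mul, norm_mul]
  have hnum : ‖(q ^ (n + 1))‖ * ‖(qPochInf q (q ^ (n + 1)))‖
        * ‖(qPoch (q ^ 3) (q ^ 3) n)‖
      ≤ ‖q‖ * Real.exp (Dq q) * Real.exp (2 * Dq (q ^ 3)) * ‖q‖ ^ n := by
    have e : ‖(q ^ (n + 1))‖ = ‖q‖ * ‖q‖ ^ n := by
      rw [norm_pow, pow_succ]; ring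
    rw [e, show ‖q‖ * Real.exp (Dq q) * Real.exp (2 * Dq (q ^ 3)) * ‖q‖ ^ n
      = ‖q‖ * ‖q‖ ^ n * Real.exp (Dq q) * Real.exp (2 * Dq (q ^ 3)) from by
        ring]
    have h0 : (0:ℝ) ≤ ‖q‖ * ‖q‖ ^ n := by positivity
    gcongr
  have hden : Real.exp (-Dq q) * Real.exp (-(2 * Dq (q ^ 3)))
      ≤ ‖(qPochInf q (-q ^ (n + 2)))‖
        * ‖(qPoch (q ^ 3) (-q ^ 3) (n + 1))‖ := by
    gcongr <;> exact (Real.exp_pos _).le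
  calc ‖(q ^ (n + 1))‖ * ‖(qPochInf q (q ^ (n + 1)))‖
        * ‖(qPoch (q ^ 3) (q ^ 3) n)‖
        / (‖(qPochInf q (-q ^ (n + 2)))‖
          * ‖(qPoch (q ^ 3) (-q ^ 3) (n + 1))‖)
      ≤ ‖q‖ * Real.exp (Dq q) * Real.exp (2 * Dq (q ^ 3)) * ‖q‖ ^ n
        / (Real.exp (-Dq q) * Real.exp (-(2 * Dq (q ^ 3)))) := by
        apply div_le_div₀ (by positivity) hnum (by positivity) hden
    _ = ‖q‖ * Real.exp (Dq q) * Real.exp (2 * Dq (q ^ 3))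
        / (Real.exp (-Dq q) * Real.exp (-(2 * Dq (q ^ 3)))) * ‖q‖ ^ n := by
        ring

lemma summable_tfun {q : ℂ} (hq : ‖q‖ < 1) :
    Summable fun n => ‖tfun q n‖ := by
  refine Summable.of_nonneg_of_le (fun _ => norm_nonneg _) (norm_tfun_le hq) ?_
  exact (summable_geometric_of_lt_one (norm_nonneg q) hq).mul_left _

end ThmA2Aux

theorem thmA2_c (q : ℂ) (hq : ‖q‖ < 1) :
    ∑' n : ℕ, q ^ (n + 1) * qPochInf q (q ^ (n + 1)) * qPoch (q ^ 3) (q ^ 3) n /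
        (qPochInf q (-q ^ (n + 2)) * qPoch (q ^ 3) (-q ^ 3) (n + 1))
      = (1 / 2) * (qPochInf (q ^ 3) (q ^ 3) / qPochInf (q ^ 3) (-q ^ 3) -
          qPochInf q q / qPochInf q (-q)) := by
  have hpartial : ∀ N, ∑ n ∈ Finset.range N, ThmA2Aux.tfun q n
      = (ThmA2Aux.Ffun q N - ThmA2Aux.Ffun q 0) / 2 := by
    intro N
    rw [Finset.sum_congr rfl fun n _ => ThmA2Aux.key_step hq n, ← Finset.sum_div,
      Finset.sum_range_sub]
  have hF0 : ThmA2Aux.Ffun q 0 = qPochInf q q / qPochInf q (-q) := by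
    simp [ThmA2Aux.Ffun, qPoch]
  have hHasSum : HasSum (ThmA2Aux.tfun q)
      ((qPochInf (q ^ 3) (q ^ 3) / qPochInf (q ^ 3) (-q ^ 3) - ThmA2Aux.Ffun q 0) / 2) := by
    rw [hasSum_iff_tendsto_nat_of_summable_norm (ThmA2Aux.summable_tfun hq)]
    simp only [hpartial]
    exact ((ThmA2Aux.tendsto_Ffun hq).sub tendsto_const_nhds).div_const 2
  have := hHasSum.tsum_eq
  rw [hF0] at this
  rw [show (∑' n : ℕ, q ^ (n + 1) * qPochInf q (q ^ (n + 1)) * qPoch (q ^ 3) (q ^ 3) n /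
        (qPochInf q (-q ^ (n + 2)) * qPoch (q ^ 3) (-q ^ 3) (n + 1)))
      = ∑' n : ℕ, ThmA2Aux.tfun q n from rfl, this]
  ring
end

section
/- For every complex number q with |q| < 1, ∑_{n≥1} q^n (−q^n; q)_∞ (−q^3; q^3)_{n−1} / [ (q^{n+1}; q)_∞ (q^3; q^3)_n ] = −(1/2)·( (−q^3; q^3)_∞/(q^3; q^3)_∞ − (−q; q)_∞/(q; q)_∞ ). -/
open Filter Topology Finset

lemma one_sub_ne_of_abs_lt {z : ℂ} (hz : ‖z‖ < 1) : (1 : ℂ) - z ≠ 0 := by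
  intro h0
  rw [sub_eq_zero] at h0
  rw [← h0] at hz
  simp at hz

lemma qp_factor_ne (q a : ℂ) (hq : ‖q‖ < 1) (ha : ‖a‖ < 1) (j : ℕ) :
    1 - a * q ^ j ≠ 0 := by
  apply one_sub_ne_of_abs_lt
  rw [norm_mul, norm_pow]
  calc ‖a‖ * ‖q‖ ^ j ≤ ‖a‖ * 1 :=
        mul_le_mul_of_nonneg_left (pow_le_one₀ (norm_nonneg q) hq.le)
          (norm_nonneg a)
    _ = ‖a‖ := mul_one _
    _ < 1 := ha

lemma qp_log_summable (q a : ℂ) (hq : ‖q‖ < 1) (ha : ‖a‖ < 1) :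
    Summable fun j : ℕ => Complex.log (1 - a * q ^ j) := by
  have hgeo : Summable fun j : ℕ => 3 / 2 * (‖a‖ * ‖q‖ ^ j) :=
    ((summable_geometric_of_lt_one (norm_nonneg q) hq).mul_left _).mul_left _
  apply Summable.of_norm_bounded_eventually_nat hgeo
  have hev : ∀ᶠ j : ℕ in atTop, ‖a‖ * ‖q‖ ^ j ≤ 1 / 2 := by
    have h1 : Tendsto (fun j : ℕ => ‖a‖ * ‖q‖ ^ j) atTop
        (𝓝 (‖a‖ * 0)) :=
      (tendsto_pow_atTop_nhds_zero_of_lt_one (norm_nonneg q) hq).const_mul _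
    rw [mul_zero] at h1
    exact h1.eventually_le_const (by norm_num)
  filter_upwards [hev] with j hj
  have h1 : ‖-(a * q ^ j)‖ ≤ 1 / 2 := by
    rw [norm_neg]
    simpa [norm_mul, norm_pow] using hj
  have h2 := Complex.norm_log_one_add_half_le_self h1
  rw [show (1 : ℂ) + -(a * q ^ j) = 1 - a * q ^ j by ring] at h2
  apply h2.trans
  rw [norm_neg]
  simp [norm_mul, norm_pow]

lemma qp_mult (q a : ℂ) (hq : ‖q‖ < 1) (ha : ‖a‖ < 1) :
    Multipliable fun j : ℕ => 1 - a * q ^ j :=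
  Complex.multipliable_of_summable_log (qp_log_summable q a hq ha)

lemma qp_tendsto (q a : ℂ) (hq : ‖q‖ < 1) (ha : ‖a‖ < 1) :
    Tendsto (fun n => qPoch q a n) atTop (𝓝 (qPochInf q a)) :=
  (qp_mult q a hq ha).hasProd.tendsto_prod_nat

lemma qpInf_exp (q a : ℂ) (hq : ‖q‖ < 1) (ha : ‖a‖ < 1) :
    qPochInf q a = Complex.exp (∑' j : ℕ, Complex.log (1 - a * q ^ j)) := by
  rw [qPochInf]
  exact (Complex.cexp_tsum_eq_tprod (fun j => qp_factor_ne q a hq ha j)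
    (qp_log_summable q a hq ha)).symm

lemma abs_mul_pow_lt (q a : ℂ) (hq : ‖q‖ < 1) (ha : ‖a‖ < 1) (k : ℕ) :
    ‖a * q ^ k‖ < 1 := by
  rw [norm_mul, norm_pow]
  calc ‖a‖ * ‖q‖ ^ k ≤ ‖a‖ * 1 :=
        mul_le_mul_of_nonneg_left (pow_le_one₀ (norm_nonneg q) hq.le)
          (norm_nonneg a)
    _ = ‖a‖ := mul_one _
    _ < 1 := ha

lemma qpInf_ne (q a : ℂ) (hq : ‖q‖ < 1) (ha : ‖a‖ < 1) :
    qPochInf q a ≠ 0 := by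
  rw [qpInf_exp q a hq ha]
  exact Complex.exp_ne_zero _

lemma qp_shift (q a : ℂ) (hq : ‖q‖ < 1) (ha : ‖a‖ < 1) (k : ℕ) :
    qPochInf q a = qPoch q a k * qPochInf q (a * q ^ k) := by
  have hak : ‖a * q ^ k‖ < 1 := abs_mul_pow_lt q a hq ha k
  have h2 : qPochInf q (a * q ^ k) =
      Complex.exp (∑' j : ℕ, Complex.log (1 - a * q ^ (j + k))) := by
    rw [qpInf_exp q (a * q ^ k) hq hak]
    congr 1
    apply tsum_congr
    intro j
    congr 2
    rw [pow_add]
    ring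
  have h3 := Summable.sum_add_tsum_nat_add (f := fun j : ℕ => Complex.log (1 - a * q ^ j)) k
    (qp_log_summable q a hq ha)
  rw [qpInf_exp q a hq ha, h2, ← h3, Complex.exp_add]
  congr 1
  rw [Complex.exp_sum, qPoch]
  apply Finset.prod_congr rfl
  intro j _
  rw [Complex.exp_log (qp_factor_ne q a hq ha j)]

lemma tele_aux (x A P B Q : ℂ) (hx1 : 1 - x ≠ 0) (hx3 : 1 - x ^ 3 ≠ 0) (hB : B ≠ 0)
    (hQ : Q ≠ 0) :
    x * ((1 + x) * A) * P / (B * (Q * (1 - x ^ 3))) =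
      1 / 2 * ((1 + x) * A * P / ((1 - x) * B * Q) - A * (P * (1 + x ^ 3)) / (B * (Q * (1 - x ^ 3)))) := by
  rw [div_sub_div _ _ (mul_ne_zero (mul_ne_zero hx1 hB) hQ)
      (mul_ne_zero hB (mul_ne_zero hQ hx3)), ← mul_div_assoc,
    div_eq_div_iff (mul_ne_zero hB (mul_ne_zero hQ hx3))
      (mul_ne_zero (mul_ne_zero (mul_ne_zero hx1 hB) hQ) (mul_ne_zero hB (mul_ne_zero hQ hx3)))]
  ring

lemma qpoch_ne (q a : ℂ) (hq : ‖q‖ < 1) (ha : ‖a‖ < 1) (n : ℕ) :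
    qPoch q a n ≠ 0 := by
  rw [qPoch, Finset.prod_ne_zero_iff]
  exact fun j _ => qp_factor_ne q a hq ha j

theorem thmA2_d (q : ℂ) (hq : ‖q‖ < 1) :
    ∑' n : ℕ, q ^ (n + 1) * qPochInf q (-q ^ (n + 1)) * qPoch (q ^ 3) (-q ^ 3) n /
        (qPochInf q (q ^ (n + 2)) * qPoch (q ^ 3) (q ^ 3) (n + 1))
      = -(1 / 2) * (qPochInf (q ^ 3) (-q ^ 3) / qPochInf (q ^ 3) (q ^ 3) -
          qPochInf q (-q) / qPochInf q q) := by
  have habs := norm_nonneg q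
  have hq3 : ‖q ^ 3‖ < 1 := by
    rw [norm_pow]; exact pow_lt_one₀ habs hq (by norm_num)
  have hq3n : ‖-q ^ 3‖ < 1 := by rwa [norm_neg]
  have hqn : ‖-q‖ < 1 := by rwa [norm_neg]
  have haq : ∀ k : ℕ, ‖q ^ (k + 1)‖ < 1 := fun k => by
    rw [norm_pow]; exact pow_lt_one₀ habs hq k.succ_ne_zero
  have haqn : ∀ k : ℕ, ‖-q ^ (k + 1)‖ < 1 := fun k => by
    rw [norm_neg]; exact haq k
  -- abbreviations
  set A : ℕ → ℂ := fun n => qPochInf q (-q ^ (n + 1)) with hA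
  set B : ℕ → ℂ := fun n => qPochInf q (q ^ (n + 1)) with hB
  set P : ℕ → ℂ := fun n => qPoch (q ^ 3) (-q ^ 3) n with hP
  set Q : ℕ → ℂ := fun n => qPoch (q ^ 3) (q ^ 3) n with hQdef
  set b : ℕ → ℂ := fun n => A n * P n / (B n * Q n) with hb
  set t : ℕ → ℂ := fun n => q ^ (n + 1) * A n * P n / (B (n + 1) * Q (n + 1)) with ht
  -- nonvanishing constants
  have hC1 : qPochInf q (-q) ≠ 0 := qpInf_ne q (-q) hq hqn
  have hC2 : qPochInf q q ≠ 0 := qpInf_ne q q hq hq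
  have hPinf : qPochInf (q ^ 3) (-q ^ 3) ≠ 0 := qpInf_ne _ _ hq3 hq3n
  have hQinf : qPochInf (q ^ 3) (q ^ 3) ≠ 0 := qpInf_ne _ _ hq3 hq3
  -- formulas for A and B via shift from the constants
  have hAform : ∀ n, A n = qPochInf q (-q) / qPoch q (-q) n := by
    intro n
    have h := qp_shift q (-q) hq hqn n
    rw [show -q * q ^ n = -q ^ (n + 1) by rw [pow_succ]; ring] at h
    rw [hA]
    rw [eq_div_iff (qpoch_ne q (-q) hq hqn n)]
    rw [h]; ring
  have hBform : ∀ n, B n = qPochInf q q / qPoch q q n := by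
    intro n
    have h := qp_shift q q hq hq n
    rw [show q * q ^ n = q ^ (n + 1) by rw [pow_succ]; ring] at h
    rw [hB]
    rw [eq_div_iff (qpoch_ne q q hq hq n)]
    rw [h]; ring
  have hBne : ∀ n, B n ≠ 0 := fun n => by
    rw [hBform n]; exact div_ne_zero hC2 (qpoch_ne q q hq hq n)
  have hQne : ∀ n, Q n ≠ 0 := fun n => qpoch_ne _ _ hq3 hq3 n
  -- one-step recurrences
  have hq1 : ∀ a : ℂ, qPoch q a 1 = 1 - a := fun a => by simp [qPoch]
  have hAstep : ∀ n, A n = (1 + q ^ (n + 1)) * A (n + 1) := by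
    intro n
    have h := qp_shift q (-q ^ (n + 1)) hq (haqn n) 1
    rw [show -q ^ (n + 1) * q ^ 1 = -q ^ (n + 1 + 1) by ring, hq1] at h
    simp only [hA]
    rw [h]; ring
  have hBstep : ∀ n, B n = (1 - q ^ (n + 1)) * B (n + 1) := by
    intro n
    have h := qp_shift q (q ^ (n + 1)) hq (haq n) 1
    rw [show q ^ (n + 1) * q ^ 1 = q ^ (n + 1 + 1) by ring, hq1] at h
    simp only [hB]
    exact h
  have hPstep : ∀ n, P (n + 1) = P n * (1 + (q ^ (n + 1)) ^ 3) := by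
    intro n
    rw [hP]
    simp only [qPoch, Finset.prod_range_succ]
    congr 1
    ring
  have hQstep : ∀ n, Q (n + 1) = Q n * (1 - (q ^ (n + 1)) ^ 3) := by
    intro n
    rw [hQdef]
    simp only [qPoch, Finset.prod_range_succ]
    congr 1
    ring
  -- telescoping identity
  have tele : ∀ n, t n = (1 / 2) * (b n - b (n + 1)) := by
    intro n
    have hx1 : (1 : ℂ) - q ^ (n + 1) ≠ 0 := one_sub_ne_of_abs_lt (haq n)
    have hx3 : (1 : ℂ) - (q ^ (n + 1)) ^ 3 ≠ 0 := by
      apply one_sub_ne_of_abs_lt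
      rw [norm_pow]
      exact pow_lt_one₀ (norm_nonneg _) (haq n) (by norm_num)
    rw [ht, hb]
    simp only
    rw [hAstep n, hBstep n, hPstep n, hQstep n]
    exact tele_aux (q ^ (n + 1)) (A (n + 1)) (P n) (B (n + 1)) (Q n) hx1 hx3
      (hBne (n + 1)) (hQne n)
  -- limits
  have hAt : Tendsto A atTop (𝓝 1) := by
    have h : Tendsto (fun n => qPochInf q (-q) / qPoch q (-q) n) atTop
        (𝓝 (qPochInf q (-q) / qPochInf q (-q))) :=
      tendsto_const_nhds.div (qp_tendsto q (-q) hq hqn) hC1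
    rw [div_self hC1] at h
    exact h.congr fun n => (hAform n).symm
  have hBt : Tendsto B atTop (𝓝 1) := by
    have h : Tendsto (fun n => qPochInf q q / qPoch q q n) atTop
        (𝓝 (qPochInf q q / qPochInf q q)) :=
      tendsto_const_nhds.div (qp_tendsto q q hq hq) hC2
    rw [div_self hC2] at h
    exact h.congr fun n => (hBform n).symm
  have hPt : Tendsto P atTop (𝓝 (qPochInf (q ^ 3) (-q ^ 3))) := qp_tendsto _ _ hq3 hq3n
  have hQt : Tendsto Q atTop (𝓝 (qPochInf (q ^ 3) (q ^ 3))) := qp_tendsto _ _ hq3 hq3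
  set L : ℂ := qPochInf (q ^ 3) (-q ^ 3) / qPochInf (q ^ 3) (q ^ 3) with hL
  have hbt : Tendsto b atTop (𝓝 L) := by
    have h : Tendsto b atTop (𝓝 (1 * qPochInf (q ^ 3) (-q ^ 3) /
        (1 * qPochInf (q ^ 3) (q ^ 3)))) :=
      (hAt.mul hPt).div (hBt.mul hQt) (by simpa using hQinf)
    simpa [hL] using h
  -- summability
  have hBt' : Tendsto (fun n => B (n + 1)) atTop (𝓝 1) :=
    hBt.comp (tendsto_add_atTop_nat 1)
  have hQt' : Tendsto (fun n => Q (n + 1)) atTop (𝓝 (qPochInf (q ^ 3) (q ^ 3))) :=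
    hQt.comp (tendsto_add_atTop_nat 1)
  set u : ℕ → ℂ := fun n => A n * P n / (B (n + 1) * Q (n + 1)) with hu
  have hut : Tendsto u atTop (𝓝 L) := by
    have h : Tendsto u atTop (𝓝 (1 * qPochInf (q ^ 3) (-q ^ 3) /
        (1 * qPochInf (q ^ 3) (q ^ 3)))) :=
      (hAt.mul hPt).div (hBt'.mul hQt') (by simpa using hQinf)
    simpa [hL] using h
  have hsum : Summable t := by
    have hev : ∀ᶠ n : ℕ in atTop, ‖t n‖ ≤ (‖L‖ + 1) * (‖q‖ * ‖q‖ ^ n) := by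
      have h1 : Tendsto (fun n => ‖u n‖) atTop (𝓝 ‖L‖) := hut.norm
      filter_upwards [h1.eventually_le_const (by linarith [norm_nonneg L] : ‖L‖ < ‖L‖ + 1)]
        with n hn
      have heq : t n = q ^ (n + 1) * u n := by rw [ht, hu]; simp only; ring
      rw [heq, norm_mul]
      have hq1 : ‖q ^ (n + 1)‖ = ‖q‖ * ‖q‖ ^ n := by
        rw [norm_pow, pow_succ]; ring
      rw [hq1]
      calc ‖q‖ * ‖q‖ ^ n * ‖u n‖
          ≤ ‖q‖ * ‖q‖ ^ n * (‖L‖ + 1) := by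
            apply mul_le_mul_of_nonneg_left hn
            positivity
        _ = (‖L‖ + 1) * (‖q‖ * ‖q‖ ^ n) := by ring
    exact Summable.of_norm_bounded_eventually_nat
      (((summable_geometric_of_lt_one habs hq).mul_left _).mul_left _) hev
  -- partial sums telescope
  have hpartial : ∀ N, ∑ n ∈ Finset.range N, t n = (1 / 2) * (b 0 - b N) := by
    intro N
    rw [Finset.sum_congr rfl fun n _ => tele n, ← Finset.mul_sum, Finset.sum_range_sub' b N]
  have h1 : Tendsto (fun N => ∑ n ∈ Finset.range N, t n) atTop (𝓝 (∑' n, t n)) :=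
    hsum.hasSum.tendsto_sum_nat
  have h2 : Tendsto (fun N => ∑ n ∈ Finset.range N, t n) atTop (𝓝 ((1 / 2) * (b 0 - L))) := by
    have h : Tendsto (fun N => (1 / 2 : ℂ) * (b 0 - b N)) atTop (𝓝 ((1 / 2) * (b 0 - L))) :=
      (tendsto_const_nhds.sub hbt).const_mul _
    exact h.congr fun N => (hpartial N).symm
  have hts : ∑' n, t n = (1 / 2) * (b 0 - L) := tendsto_nhds_unique h1 h2
  -- identify the statement's sum with ∑' t
  have hgoal : (∑' n : ℕ, q ^ (n + 1) * qPochInf q (-q ^ (n + 1)) * qPoch (q ^ 3) (-q ^ 3) n /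
      (qPochInf q (q ^ (n + 2)) * qPoch (q ^ 3) (q ^ 3) (n + 1))) = ∑' n, t n := by
    apply tsum_congr
    intro n
    rw [ht, hA, hB, hP, hQdef]
  rw [hgoal, hts]
  have hb0 : b 0 = qPochInf q (-q) / qPochInf q q := by
    rw [hb]
    simp [hA, hB, hP, hQdef, qPoch, pow_one]
  rw [hb0, hL]
  ring
end

section
/- For every complex number q with |q| < 1 (with values of q making any denominator factor 1 + q^j vanish excluded), ∑_{m≥1, n≥0} q^{2m+n} (−q^3; q^3)_{m−1} (−q; q)_{m+n} (q^3; q^3)_{m+n−1} / [ (−q; q)_{m−1} (q; q)_m^2 (q; q)_{m+n−1} (−q^3; q^3)_{m+n} ] = (1/3)·(q^3; q^3)_∞ / (q; q)_∞^3 − (1/2)·(q^3; q^3)_∞ (−q; q)_∞ / [ (−q^3; q^3)_∞ (q; q)_∞ ] + 1/6. -/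
open Filter Finset Topology Complex

namespace DS1aux

/-- `∏_{j=1}^k (1 + q^j + q^{2j})`. -/
noncomputable def Pc (q : ℂ) (k : ℕ) : ℂ :=
  ∏ j ∈ Finset.range k, (1 + q ^ (j + 1) + (q ^ (j + 1)) ^ 2)

/-- `∏_{j=1}^k (1 - q^j + q^{2j})`. -/
noncomputable def Qc (q : ℂ) (k : ℕ) : ℂ :=
  ∏ j ∈ Finset.range k, (1 - q ^ (j + 1) + (q ^ (j + 1)) ^ 2)

noncomputable def PcInf (q : ℂ) : ℂ := ∏' j : ℕ, (1 + q ^ (j + 1) + (q ^ (j + 1)) ^ 2)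
noncomputable def QcInf (q : ℂ) : ℂ := ∏' j : ℕ, (1 - q ^ (j + 1) + (q ^ (j + 1)) ^ 2)

/-! ### generic facts -/

lemma one_sub_ne_zero_of_norm_lt_one {x : ℂ} (hx : ‖x‖ < 1) : 1 - x ≠ 0 := by
  intro h
  have : x = 1 := by linear_combination -h
  rw [this] at hx; simp at hx

lemma one_add_ne_zero_of_norm_lt_one {x : ℂ} (hx : ‖x‖ < 1) : 1 + x ≠ 0 := by
  have : ‖-x‖ < 1 := by simpa using hx
  simpa [sub_neg_eq_add] using one_sub_ne_zero_of_norm_lt_one this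

lemma one_add_add_sq_ne_zero {x : ℂ} (hx : ‖x‖ < 1) : 1 + x + x ^ 2 ≠ 0 := by
  have h3 : ‖x ^ 3‖ < 1 := by
    rw [norm_pow]
    calc ‖x‖ ^ 3 ≤ ‖x‖ := by
          apply pow_le_of_le_one (norm_nonneg _) hx.le (by norm_num)
      _ < 1 := hx
  have h := one_sub_ne_zero_of_norm_lt_one h3
  intro hc
  apply h
  linear_combination (1 - x) * hc

lemma one_sub_add_sq_ne_zero {x : ℂ} (hx : ‖x‖ < 1) : 1 - x + x ^ 2 ≠ 0 := by
  have h3 : ‖-(x ^ 3)‖ < 1 := by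
    rw [norm_neg, norm_pow]
    calc ‖x‖ ^ 3 ≤ ‖x‖ := by
          apply pow_le_of_le_one (norm_nonneg _) hx.le (by norm_num)
      _ < 1 := hx
  have h := one_sub_ne_zero_of_norm_lt_one h3
  intro hc
  apply h
  linear_combination (1 + x) * hc

/-- logs of `1 - b j` are summable when `∑ ‖b j‖ < ∞`. -/
lemma summable_log {b : ℕ → ℂ} (hs : Summable fun j => ‖b j‖) :
    Summable fun j => Complex.log (1 - b j) := by
  have hb : Tendsto b atTop (𝓝 0) := (hs.of_norm).tendsto_atTop_zero
  have hbn : Tendsto (fun j => ‖b j‖) atTop (𝓝 0) := by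
    simpa using hb.norm
  have hev : ∀ᶠ j in atTop, ‖b j‖ ≤ 1 / 2 := by
    filter_upwards [hbn.eventually_lt_const (by norm_num : (0:ℝ) < 1/2)] with j hj
    exact hj.le
  apply Summable.of_norm_bounded_eventually_nat (g := fun j => 3 / 2 * ‖b j‖) (hs.mul_left _)
  filter_upwards [hev] with j hj
  have : ‖Complex.log (1 + -b j)‖ ≤ 3 / 2 * ‖-b j‖ :=
    Complex.norm_log_one_add_half_le_self (by simpa using hj)
  simpa [sub_eq_add_neg] using this

lemma hasProd_one_sub {b : ℕ → ℂ} (hs : Summable fun j => ‖b j‖)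
    (hnz : ∀ j, 1 - b j ≠ 0) :
    HasProd (fun j => 1 - b j) (Complex.exp (∑' j, Complex.log (1 - b j))) := by
  have hl := summable_log hs
  have h := hl.hasSum.cexp
  have h2 : (Complex.exp ∘ fun j => Complex.log (1 - b j)) = fun j => 1 - b j :=
    funext fun j => Complex.exp_log (hnz j)
  rwa [h2] at h

lemma multipliable_one_sub {b : ℕ → ℂ} (hs : Summable fun j => ‖b j‖)
    (hnz : ∀ j, 1 - b j ≠ 0) : Multipliable fun j => 1 - b j :=
  (hasProd_one_sub hs hnz).multipliable

lemma tprod_one_sub_ne_zero {b : ℕ → ℂ} (hs : Summable fun j => ‖b j‖)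
    (hnz : ∀ j, 1 - b j ≠ 0) : (∏' j, (1 - b j)) ≠ 0 := by
  rw [(hasProd_one_sub hs hnz).tprod_eq]
  exact Complex.exp_ne_zero _

lemma tendsto_prod_one_sub {b : ℕ → ℂ} (hs : Summable fun j => ‖b j‖)
    (hnz : ∀ j, 1 - b j ≠ 0) :
    Tendsto (fun n => ∏ j ∈ Finset.range n, (1 - b j)) atTop (𝓝 (∏' j, (1 - b j))) := by
  have hp := hasProd_one_sub hs hnz
  rw [hp.tprod_eq]
  exact hp.tendsto_prod_nat

/-- Telescoping sums with a limit. -/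
lemma hasSum_telescope {b : ℕ → ℂ} {L : ℂ} (hb : Tendsto b atTop (𝓝 L))
    (hs : Summable fun n => ‖b (n + 1) - b n‖) :
    HasSum (fun n => b (n + 1) - b n) (L - b 0) := by
  rw [hasSum_iff_tendsto_nat_of_summable_norm hs]
  have : (fun n => ∑ i ∈ Finset.range n, (b (i + 1) - b i)) = fun n => b n - b 0 := by
    funext n; exact Finset.sum_range_sub b n
  rw [this]
  exact hb.sub_const _

lemma exists_pos_le_norm {g : ℕ → ℂ} {L : ℂ} (hg : Tendsto g atTop (𝓝 L)) (hL : L ≠ 0)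
    (h : ∀ k, g k ≠ 0) : ∃ δ : ℝ, 0 < δ ∧ ∀ k, δ ≤ ‖g k‖ := by
  have hgn : Tendsto (fun k => ‖g k‖) atTop (𝓝 ‖L‖) := hg.norm
  have hL2 : (0:ℝ) < ‖L‖ / 2 := by
    have := norm_pos_iff.mpr hL
    linarith
  have hev : ∀ᶠ k in atTop, ‖L‖ / 2 < ‖g k‖ :=
    hgn.eventually_const_lt (by linarith [norm_pos_iff.mpr hL])
  obtain ⟨N, hN⟩ := eventually_atTop.mp hev
  have hne : (Finset.range (N + 1)).Nonempty := Finset.nonempty_range_iff.mpr (Nat.succ_ne_zero N)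
  refine ⟨(Finset.range (N + 1)).inf' hne (fun k => min (‖L‖ / 2) ‖g k‖), ?_, ?_⟩
  · rw [Finset.lt_inf'_iff]
    intro k _
    exact lt_min hL2 (norm_pos_iff.mpr (h k))
  · intro k
    by_cases hk : k ≤ N
    · calc (Finset.range (N + 1)).inf' hne (fun k => min (‖L‖ / 2) ‖g k‖)
          ≤ min (‖L‖ / 2) ‖g k‖ :=
            Finset.inf'_le _ (Finset.mem_range.mpr (by omega))
        _ ≤ ‖g k‖ := min_le_right _ _
    · calc (Finset.range (N + 1)).inf' hne (fun k => min (‖L‖ / 2) ‖g k‖)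
          ≤ min (‖L‖ / 2) ‖g N‖ :=
            Finset.inf'_le _ (Finset.mem_range.mpr (by omega))
        _ ≤ ‖L‖ / 2 := min_le_left _ _
        _ ≤ ‖g k‖ := (hN k (by omega)).le

lemma exists_norm_le {g : ℕ → ℂ} {L : ℂ} (hg : Tendsto g atTop (𝓝 L)) :
    ∃ C : ℝ, ∀ k, ‖g k‖ ≤ C := by
  obtain ⟨C, hC⟩ := hg.norm.bddAbove_range
  exact ⟨C, fun k => hC ⟨k, rfl⟩⟩

/-! ### q-specific facts -/

section withq
variable {q : ℂ} (hq : ‖q‖ < 1)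

include hq

lemma x_norm_lt (j : ℕ) : ‖q ^ (j + 1)‖ < 1 := by
  rw [norm_pow]
  calc ‖q‖ ^ (j + 1) ≤ ‖q‖ := pow_le_of_le_one (norm_nonneg _) hq.le (Nat.succ_ne_zero j)
    _ < 1 := hq

lemma E_factor_ne (j : ℕ) : 1 - q * q ^ j ≠ 0 := by
  have : q * q ^ j = q ^ (j + 1) := by ring
  rw [this]; exact one_sub_ne_zero_of_norm_lt_one (x_norm_lt hq j)

lemma M_factor_ne (j : ℕ) : 1 - (-q) * q ^ j ≠ 0 := by
  have : 1 - (-q) * q ^ j = 1 + q ^ (j + 1) := by ring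
  rw [this]; exact one_add_ne_zero_of_norm_lt_one (x_norm_lt hq j)

lemma E_ne (n : ℕ) : qPoch q q n ≠ 0 :=
  Finset.prod_ne_zero_iff.mpr fun j _ => E_factor_ne hq j

lemma M_ne (n : ℕ) : qPoch q (-q) n ≠ 0 :=
  Finset.prod_ne_zero_iff.mpr fun j _ => M_factor_ne hq j

lemma Pc_ne (n : ℕ) : Pc q n ≠ 0 :=
  Finset.prod_ne_zero_iff.mpr fun j _ => one_add_add_sq_ne_zero (x_norm_lt hq j)

lemma Qc_ne (n : ℕ) : Qc q n ≠ 0 :=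
  Finset.prod_ne_zero_iff.mpr fun j _ => one_sub_add_sq_ne_zero (x_norm_lt hq j)

omit hq in
lemma cube_factor (j : ℕ) : 1 - q ^ 3 * (q ^ 3) ^ j = (1 - q * q ^ j) * (1 + q ^ (j + 1) + (q ^ (j + 1)) ^ 2) := by
  have h : (q ^ 3) ^ j = (q ^ j) ^ 3 := by
    rw [← pow_mul, mul_comm, pow_mul]
  rw [h]; ring

omit hq in
lemma cube_factor_neg (j : ℕ) : 1 - (-q ^ 3) * (q ^ 3) ^ j
    = (1 - (-q) * q ^ j) * (1 - q ^ (j + 1) + (q ^ (j + 1)) ^ 2) := by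
  have h : (q ^ 3) ^ j = (q ^ j) ^ 3 := by
    rw [← pow_mul, mul_comm, pow_mul]
  rw [h]; ring

omit hq in
lemma split_P (k : ℕ) : qPoch (q ^ 3) (q ^ 3) k = qPoch q q k * Pc q k := by
  rw [qPoch, qPoch, Pc, ← Finset.prod_mul_distrib]
  exact Finset.prod_congr rfl fun j _ => cube_factor j

omit hq in
lemma split_Q (k : ℕ) : qPoch (q ^ 3) (-q ^ 3) k = qPoch q (-q) k * Qc q k := by
  rw [qPoch, qPoch, Qc, ← Finset.prod_mul_distrib]
  exact Finset.prod_congr rfl fun j _ => cube_factor_neg j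

/-! summability of the norm sequences -/

lemma summable_bE : Summable fun j : ℕ => ‖q * q ^ j‖ := by
  simpa [norm_mul, norm_pow] using (summable_geometric_of_lt_one (norm_nonneg q) hq).mul_left ‖q‖

lemma summable_bM : Summable fun j : ℕ => ‖(-q) * q ^ j‖ := by
  simpa [norm_mul, norm_pow] using (summable_geometric_of_lt_one (norm_nonneg q) hq).mul_left ‖q‖

lemma summable_bP : Summable fun j : ℕ => ‖-(q ^ (j + 1) + (q ^ (j + 1)) ^ 2)‖ := by
  refine Summable.of_nonneg_of_le (fun j => norm_nonneg _) (fun j => ?_)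
    ((summable_geometric_of_lt_one (norm_nonneg q) hq).mul_left (2 * ‖q‖))
  ·
    have h1 : ‖q ^ (j + 1)‖ = ‖q‖ ^ (j + 1) := norm_pow _ _
    have h2 : ‖(q ^ (j + 1)) ^ 2‖ = (‖q‖ ^ (j + 1)) ^ 2 := by rw [norm_pow, norm_pow]
    calc ‖-(q ^ (j + 1) + (q ^ (j + 1)) ^ 2)‖ ≤ ‖q ^ (j + 1)‖ + ‖(q ^ (j + 1)) ^ 2‖ := by
          rw [norm_neg]; exact norm_add_le _ _
      _ = ‖q‖ ^ (j + 1) + (‖q‖ ^ (j + 1)) ^ 2 := by rw [h1, h2]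
      _ ≤ ‖q‖ ^ (j + 1) + ‖q‖ ^ (j + 1) := by
          have : (‖q‖ ^ (j + 1)) ^ 2 ≤ (‖q‖ ^ (j + 1)) ^ 1 := by
            apply pow_le_pow_of_le_one (by positivity)
              (pow_le_one₀ (norm_nonneg _) hq.le) (by norm_num)
          simpa using this
      _ = 2 * ‖q‖ * ‖q‖ ^ j := by ring

lemma summable_bQ : Summable fun j : ℕ => ‖q ^ (j + 1) - (q ^ (j + 1)) ^ 2‖ := by
  refine Summable.of_nonneg_of_le (fun j => norm_nonneg _) (fun j => ?_)
    ((summable_geometric_of_lt_one (norm_nonneg q) hq).mul_left (2 * ‖q‖))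
  ·
    calc ‖q ^ (j + 1) - (q ^ (j + 1)) ^ 2‖ ≤ ‖q ^ (j + 1)‖ + ‖(q ^ (j + 1)) ^ 2‖ :=
          norm_sub_le _ _
      _ = ‖q‖ ^ (j + 1) + (‖q‖ ^ (j + 1)) ^ 2 := by rw [norm_pow, norm_pow, norm_pow]
      _ ≤ ‖q‖ ^ (j + 1) + ‖q‖ ^ (j + 1) := by
          have : (‖q‖ ^ (j + 1)) ^ 2 ≤ (‖q‖ ^ (j + 1)) ^ 1 := by
            apply pow_le_pow_of_le_one (by positivity)
              (pow_le_one₀ (norm_nonneg _) hq.le) (by norm_num)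
          simpa using this
      _ = 2 * ‖q‖ * ‖q‖ ^ j := by ring

/-! infinite products -/

omit hq in
lemma Pc_fun_eq : (fun j : ℕ => 1 + q ^ (j + 1) + (q ^ (j + 1)) ^ 2)
    = fun j : ℕ => 1 - -(q ^ (j + 1) + (q ^ (j + 1)) ^ 2) := by
  funext j; ring

omit hq in
lemma Qc_fun_eq : (fun j : ℕ => 1 - q ^ (j + 1) + (q ^ (j + 1)) ^ 2)
    = fun j : ℕ => 1 - (q ^ (j + 1) - (q ^ (j + 1)) ^ 2) := by
  funext j; ring

lemma Pfac_ne (j : ℕ) : 1 - -(q ^ (j + 1) + (q ^ (j + 1)) ^ 2) ≠ 0 := by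
  have h := one_add_add_sq_ne_zero (x_norm_lt hq j)
  intro hc; exact h (by linear_combination hc)

lemma Qfac_ne (j : ℕ) : 1 - (q ^ (j + 1) - (q ^ (j + 1)) ^ 2) ≠ 0 := by
  have h := one_sub_add_sq_ne_zero (x_norm_lt hq j)
  intro hc; exact h (by linear_combination hc)

lemma tendsto_E : Tendsto (fun n => qPoch q q n) atTop (𝓝 (qPochInf q q)) :=
  tendsto_prod_one_sub (summable_bE hq) (E_factor_ne hq)

lemma tendsto_M : Tendsto (fun n => qPoch q (-q) n) atTop (𝓝 (qPochInf q (-q))) :=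
  tendsto_prod_one_sub (summable_bM hq) (M_factor_ne hq)

lemma tendsto_Pc : Tendsto (fun n => Pc q n) atTop (𝓝 (PcInf q)) := by
  have h := tendsto_prod_one_sub (summable_bP hq)
    (Pfac_ne hq)
  have e1 : (fun n => ∏ j ∈ Finset.range n, (1 - -(q ^ (j + 1) + (q ^ (j + 1)) ^ 2)))
      = fun n => Pc q n := by
    funext n; rw [Pc]; exact Finset.prod_congr rfl fun j _ => by ring
  have e2 : (∏' j : ℕ, (1 - -(q ^ (j + 1) + (q ^ (j + 1)) ^ 2))) = PcInf q := by
    rw [PcInf]; exact tprod_congr fun j => by ring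
  rwa [e1, e2] at h

lemma tendsto_Qc : Tendsto (fun n => Qc q n) atTop (𝓝 (QcInf q)) := by
  have h := tendsto_prod_one_sub (summable_bQ hq)
    (Qfac_ne hq)
  have e1 : (fun n => ∏ j ∈ Finset.range n, (1 - (q ^ (j + 1) - (q ^ (j + 1)) ^ 2)))
      = fun n => Qc q n := by
    funext n; rw [Qc]; exact Finset.prod_congr rfl fun j _ => by ring
  have e2 : (∏' j : ℕ, (1 - (q ^ (j + 1) - (q ^ (j + 1)) ^ 2))) = QcInf q := by
    rw [QcInf]; exact tprod_congr fun j => by ring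
  rwa [e1, e2] at h

lemma EInf_ne : qPochInf q q ≠ 0 :=
  tprod_one_sub_ne_zero (summable_bE hq) (E_factor_ne hq)

lemma MInf_ne : qPochInf q (-q) ≠ 0 :=
  tprod_one_sub_ne_zero (summable_bM hq) (M_factor_ne hq)

lemma PcInf_ne : PcInf q ≠ 0 := by
  have h := tprod_one_sub_ne_zero (summable_bP hq)
    (Pfac_ne hq)
  have e2 : (∏' j : ℕ, (1 - -(q ^ (j + 1) + (q ^ (j + 1)) ^ 2))) = PcInf q := by
    rw [PcInf]; exact tprod_congr fun j => by ring
  rwa [e2] at h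

lemma QcInf_ne : QcInf q ≠ 0 := by
  have h := tprod_one_sub_ne_zero (summable_bQ hq)
    (Qfac_ne hq)
  have e2 : (∏' j : ℕ, (1 - (q ^ (j + 1) - (q ^ (j + 1)) ^ 2))) = QcInf q := by
    rw [QcInf]; exact tprod_congr fun j => by ring
  rwa [e2] at h

lemma splitInf_P : qPochInf (q ^ 3) (q ^ 3) = qPochInf q q * PcInf q := by
  have hmul1 := multipliable_one_sub (summable_bE hq) (E_factor_ne hq)
  have hmul2 : Multipliable fun j : ℕ => 1 + q ^ (j + 1) + (q ^ (j + 1)) ^ 2 := by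
    rw [Pc_fun_eq]
    exact multipliable_one_sub (summable_bP hq)
      (Pfac_ne hq)
  have h : qPochInf (q ^ 3) (q ^ 3)
      = ∏' j : ℕ, ((1 - q * q ^ j) * (1 + q ^ (j + 1) + (q ^ (j + 1)) ^ 2)) := by
    rw [qPochInf]; exact tprod_congr fun j => cube_factor j
  rw [h, Multipliable.tprod_mul hmul1 hmul2]
  rfl

lemma splitInf_Q : qPochInf (q ^ 3) (-q ^ 3) = qPochInf q (-q) * QcInf q := by
  have hmul1 := multipliable_one_sub (summable_bM hq) (M_factor_ne hq)
  have hmul2 : Multipliable fun j : ℕ => 1 - q ^ (j + 1) + (q ^ (j + 1)) ^ 2 := by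
    rw [Qc_fun_eq]
    exact multipliable_one_sub (summable_bQ hq)
      (Qfac_ne hq)
  have h : qPochInf (q ^ 3) (-q ^ 3)
      = ∏' j : ℕ, ((1 - (-q) * q ^ j) * (1 - q ^ (j + 1) + (q ^ (j + 1)) ^ 2)) := by
    rw [qPochInf]; exact tprod_congr fun j => cube_factor_neg j
  rw [h, Multipliable.tprod_mul hmul1 hmul2]
  rfl

/-! ### telescoping algebra -/

lemma tele_u (k : ℕ) : q ^ (k + 1) * Pc q k / Qc q (k + 1)
    = (Pc q (k + 1) / Qc q (k + 1) - Pc q k / Qc q k) / 2 := by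
  have hP : Pc q (k + 1) = Pc q k * (1 + q ^ (k + 1) + (q ^ (k + 1)) ^ 2) :=
    Finset.prod_range_succ _ _
  have hQ : Qc q (k + 1) = Qc q k * (1 - q ^ (k + 1) + (q ^ (k + 1)) ^ 2) :=
    Finset.prod_range_succ _ _
  have hQk := Qc_ne hq k
  have hfQ := one_sub_add_sq_ne_zero (x_norm_lt hq k)
  rw [hP, hQ]
  field_simp
  ring

lemma tele_v (m : ℕ) : q ^ (m + 1) * Qc q m / (qPoch q q (m + 1)) ^ 2
    = Qc q (m + 1) / (qPoch q q (m + 1)) ^ 2 - Qc q m / (qPoch q q m) ^ 2 := by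
  have hQ : Qc q (m + 1) = Qc q m * (1 - q ^ (m + 1) + (q ^ (m + 1)) ^ 2) :=
    Finset.prod_range_succ _ _
  have hE : qPoch q q (m + 1) = qPoch q q m * (1 - q * q ^ m) :=
    Finset.prod_range_succ _ _
  have hEm := E_ne hq m
  have hf := E_factor_ne hq m
  rw [hQ, hE]
  field_simp
  ring

lemma tele_w (m : ℕ) : q ^ (m + 1) * Pc q m / (qPoch q q (m + 1)) ^ 2
    = (Pc q (m + 1) / (qPoch q q (m + 1)) ^ 2 - Pc q m / (qPoch q q m) ^ 2) / 3 := by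
  have hP : Pc q (m + 1) = Pc q m * (1 + q ^ (m + 1) + (q ^ (m + 1)) ^ 2) :=
    Finset.prod_range_succ _ _
  have hE : qPoch q q (m + 1) = qPoch q q m * (1 - q * q ^ m) :=
    Finset.prod_range_succ _ _
  have hEm := E_ne hq m
  have hf := E_factor_ne hq m
  rw [hP, hE]
  field_simp
  ring

/-! ### the simplified summand -/

/-- The simplified form of the summand. -/
noncomputable def G (q : ℂ) (p : ℕ × ℕ) : ℂ :=
  q ^ (2 * p.1 + p.2 + 2) * Qc q p.1 * Pc q (p.1 + p.2) /
    ((qPoch q q (p.1 + 1)) ^ 2 * Qc q (p.1 + p.2 + 1))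

lemma summand_eq (p : ℕ × ℕ) :
    q ^ (2 * (p.1 + 1) + p.2) * qPoch (q ^ 3) (-q ^ 3) p.1 *
        qPoch q (-q) (p.1 + 1 + p.2) * qPoch (q ^ 3) (q ^ 3) (p.1 + p.2) /
      (qPoch q (-q) p.1 * (qPoch q q (p.1 + 1)) ^ 2 * qPoch q q (p.1 + p.2) *
        qPoch (q ^ 3) (-q ^ 3) (p.1 + 1 + p.2)) = G q p := by
  obtain ⟨i, n⟩ := p
  have e1 : i + 1 + n = i + n + 1 := by omega
  have e2 : 2 * (i + 1) + n = 2 * i + n + 2 := by omega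
  rw [G]
  simp only
  rw [e1, e2, split_Q (q := q) i, split_Q (q := q) (i + n + 1), split_P (q := q) (i + n)]
  have h1 := M_ne hq i
  have h2 := M_ne hq (i + n + 1)
  have h3 := E_ne hq (i + n)
  have h4 := E_ne hq (i + 1)
  have h5 := Qc_ne hq (i + n + 1)
  have hden1 : qPoch q (-q) i * (qPoch q q (i + 1)) ^ 2 * qPoch q q (i + n) *
      (qPoch q (-q) (i + n + 1) * Qc q (i + n + 1)) ≠ 0 := by
    refine mul_ne_zero (mul_ne_zero (mul_ne_zero h1
      (pow_ne_zero 2 h4)) h3) (mul_ne_zero h2 h5)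
  have hden2 : (qPoch q q (i + 1)) ^ 2 * Qc q (i + n + 1) ≠ 0 :=
    mul_ne_zero (pow_ne_zero 2 h4) h5
  rw [div_eq_div_iff hden1 hden2]
  ring

/-- Summability of the simplified summand. -/
lemma summable_G : Summable (G q) := by
  obtain ⟨CQ, hCQ⟩ := exists_norm_le (tendsto_Qc hq)
  obtain ⟨CP, hCP⟩ := exists_norm_le (tendsto_Pc hq)
  obtain ⟨δQ, hδQ, hδQle⟩ := exists_pos_le_norm (tendsto_Qc hq) (QcInf_ne hq) (Qc_ne hq)
  obtain ⟨δE, hδE, hδEle⟩ := exists_pos_le_norm (tendsto_E hq) (EInf_ne hq) (E_ne hq)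
  set K : ℝ := CQ * CP / (δE ^ 2 * δQ) with hK
  have hCQ0 : 0 ≤ CQ := le_trans (norm_nonneg _) (hCQ 0)
  have hCP0 : 0 ≤ CP := le_trans (norm_nonneg _) (hCP 0)
  have hK0 : 0 ≤ K := by positivity
  apply Summable.of_norm_bounded (g := fun p : ℕ × ℕ => (K * (‖q‖ ^ 2) ^ p.1) * ‖q‖ ^ p.2)
  · have hs1 : Summable fun i : ℕ => K * (‖q‖ ^ 2) ^ i := by
      apply Summable.mul_left
      apply summable_geometric_of_lt_one (by positivity)
      calc ‖q‖ ^ 2 ≤ ‖q‖ := pow_le_of_le_one (norm_nonneg _) hq.le (by norm_num)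
        _ < 1 := hq
    have hs2 : Summable fun n : ℕ => ‖q‖ ^ n := summable_geometric_of_lt_one (norm_nonneg _) hq
    exact hs1.mul_of_nonneg hs2 (fun i => by positivity) (fun n => by positivity)
  · rintro ⟨i, n⟩
    rw [G]
    simp only
    rw [norm_div, norm_mul, norm_mul, norm_mul, norm_pow, norm_pow]
    have hq2 : ‖q‖ ^ (2 * i + n + 2) ≤ (‖q‖ ^ 2) ^ i * ‖q‖ ^ n := by
      have : ‖q‖ ^ (2 * i + n + 2) = (‖q‖ ^ 2) ^ i * ‖q‖ ^ n * ‖q‖ ^ 2 := by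
        rw [← pow_mul, ← pow_add, ← pow_add]
      rw [this]
      have h2 : ‖q‖ ^ 2 ≤ 1 := pow_le_one₀ (norm_nonneg _) hq.le
      nlinarith [pow_nonneg (norm_nonneg q) (2 * i + n), pow_nonneg (norm_nonneg q) n,
        pow_nonneg (pow_nonneg (norm_nonneg q) 2) i, pow_nonneg (norm_nonneg q) 2,
        mul_nonneg (pow_nonneg (pow_nonneg (norm_nonneg q) 2) i) (pow_nonneg (norm_nonneg q) n)]
    have hden : δE ^ 2 * δQ ≤ ‖qPoch q q (i + 1)‖ ^ 2 * ‖Qc q (i + n + 1)‖ := by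
      apply mul_le_mul
      · exact pow_le_pow_left₀ hδE.le (hδEle (i + 1)) 2
      · exact hδQle _
      · exact hδQ.le
      · positivity
    have hdenpos : 0 < δE ^ 2 * δQ := by positivity
    calc ‖q‖ ^ (2 * i + n + 2) * ‖Qc q i‖ * ‖Pc q (i + n)‖ /
          (‖qPoch q q (i + 1)‖ ^ 2 * ‖Qc q (i + n + 1)‖)
        ≤ ‖q‖ ^ (2 * i + n + 2) * CQ * CP / (δE ^ 2 * δQ) := by
          apply div_le_div₀ (by positivity)
          · apply mul_le_mul (mul_le_mul le_rfl (hCQ i) (norm_nonneg _) (by positivity))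
              (hCP _) (norm_nonneg _) (by positivity)
          · exact hdenpos
          · exact hden
      _ ≤ (K * (‖q‖ ^ 2) ^ i) * ‖q‖ ^ n := by
          rw [hK]
          rw [div_le_iff₀ hdenpos] at *
          have := mul_le_mul_of_nonneg_right hq2 (mul_nonneg hCQ0 hCP0)
          calc ‖q‖ ^ (2 * i + n + 2) * CQ * CP
              ≤ (‖q‖ ^ 2) ^ i * ‖q‖ ^ n * (CQ * CP) := by nlinarith
            _ = CQ * CP / (δE ^ 2 * δQ) * (‖q‖ ^ 2) ^ i * ‖q‖ ^ n * (δE ^ 2 * δQ) := by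
                field_simp
/-! ### assembling the sums -/

omit hq in
lemma summable_norm_of_geom_bound {f : ℕ → ℂ} {C r : ℝ} (hr0 : 0 ≤ r) (hr : r < 1)
    (h : ∀ n, ‖f n‖ ≤ C * r ^ n) : Summable fun n => ‖f n‖ :=
  Summable.of_nonneg_of_le (fun n => norm_nonneg _) h
    ((summable_geometric_of_lt_one hr0 hr).mul_left C)

lemma u_diff (k : ℕ) : Pc q (k + 1) / Qc q (k + 1) - Pc q k / Qc q k
    = 2 * (q ^ (k + 1) * Pc q k / Qc q (k + 1)) := by
  have h := tele_u hq k
  linear_combination (-2 : ℂ) * h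

lemma inner_hasSum (i : ℕ) : HasSum (fun n => G q (i, n))
    (q ^ (i + 1) * Qc q i / (qPoch q q (i + 1)) ^ 2 / 2 *
      (PcInf q / QcInf q - Pc q i / Qc q i)) := by
  set u : ℕ → ℂ := fun k => Pc q k / Qc q k with hu
  set b : ℕ → ℂ := fun n => u (i + n) with hb
  have hbsucc : ∀ n, b (n + 1) = u (i + n + 1) := fun n => rfl
  have hdiff : ∀ n, b (n + 1) - b n = 2 * (q ^ (i + n + 1) * Pc q (i + n) / Qc q (i + n + 1)) := by
    intro n
    rw [hbsucc n, hb]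
    simpa using u_diff hq (i + n)
  have hbt : Tendsto b atTop (𝓝 (PcInf q / QcInf q)) := by
    have hU : Tendsto u atTop (𝓝 (PcInf q / QcInf q)) :=
      (tendsto_Pc hq).div (tendsto_Qc hq) (QcInf_ne hq)
    have hcomp := hU.comp (tendsto_add_atTop_nat i)
    have : (u ∘ fun n => n + i) = b := by
      funext n; rw [hb]; simp only [Function.comp_apply]; congr 1; omega
    rwa [this] at hcomp
  obtain ⟨CP, hCP⟩ := exists_norm_le (tendsto_Pc hq)
  obtain ⟨δQ, hδQ, hδQle⟩ := exists_pos_le_norm (tendsto_Qc hq) (QcInf_ne hq) (Qc_ne hq)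
  have hCP0 : 0 ≤ CP := le_trans (norm_nonneg _) (hCP 0)
  have hsn : Summable fun n => ‖b (n + 1) - b n‖ := by
    apply summable_norm_of_geom_bound (C := 2 * ‖q‖ ^ (i + 1) * CP / δQ)
      (norm_nonneg q) hq
    intro n
    have he : ‖b (n + 1) - b n‖
        = 2 * (‖q‖ ^ (i + 1) * ‖q‖ ^ n) * ‖Pc q (i + n)‖ / ‖Qc q (i + n + 1)‖ := by
      rw [hdiff n, norm_mul, norm_div, norm_mul, norm_pow]
      have h2 : ‖(2 : ℂ)‖ = 2 := by simp
      have h3 : ‖q‖ ^ (i + n + 1) = ‖q‖ ^ (i + 1) * ‖q‖ ^ n := by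
        rw [← pow_add]; congr 1; omega
      rw [h2, h3]; ring
    rw [he]
    calc 2 * (‖q‖ ^ (i + 1) * ‖q‖ ^ n) * ‖Pc q (i + n)‖ / ‖Qc q (i + n + 1)‖
        ≤ 2 * (‖q‖ ^ (i + 1) * ‖q‖ ^ n) * CP / δQ := by
          apply div_le_div₀ (by positivity) ?_ hδQ (hδQle _)
          have := hCP (i + n)
          have hn : (0:ℝ) ≤ 2 * (‖q‖ ^ (i + 1) * ‖q‖ ^ n) := by positivity
          nlinarith [norm_nonneg (Pc q (i + n))]
      _ = 2 * ‖q‖ ^ (i + 1) * CP / δQ * ‖q‖ ^ n := by ring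
  have htel := hasSum_telescope hbt hsn
  have hb0 : b 0 = Pc q i / Qc q i := by rw [hb]; simp [hu]
  rw [hb0] at htel
  have hmul := htel.mul_left (q ^ (i + 1) * Qc q i / (qPoch q q (i + 1)) ^ 2 / 2)
  have heq : (fun n => q ^ (i + 1) * Qc q i / (qPoch q q (i + 1)) ^ 2 / 2 * (b (n + 1) - b n))
      = fun n => G q (i, n) := by
    funext n
    rw [hdiff n, G]
    simp only
    have h4 := E_ne hq (i + 1)
    have h5 := Qc_ne hq (i + n + 1)
    field_simp
    ring
  rwa [heq] at hmul

lemma outer_value (i : ℕ) :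
    q ^ (i + 1) * Qc q i / (qPoch q q (i + 1)) ^ 2 / 2 *
      (PcInf q / QcInf q - Pc q i / Qc q i)
    = PcInf q / QcInf q / 2 *
        (Qc q (i + 1) / (qPoch q q (i + 1)) ^ 2 - Qc q i / (qPoch q q i) ^ 2)
      - 1 / 6 *
        (Pc q (i + 1) / (qPoch q q (i + 1)) ^ 2 - Pc q i / (qPoch q q i) ^ 2) := by
  rw [← tele_v hq i]
  have hw := tele_w hq i
  have hw' : Pc q (i + 1) / qPoch q q (i + 1) ^ 2 - Pc q i / qPoch q q i ^ 2
      = 3 * (q ^ (i + 1) * Pc q i / (qPoch q q (i + 1)) ^ 2) := by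
    rw [hw]; ring
  rw [hw']
  have h1 := E_ne hq (i + 1)
  have h2 := Qc_ne hq i
  have h3 := QcInf_ne hq
  field_simp [h1, h2, h3]
  ring

lemma outer_summable_v : Summable fun i =>
    ‖Qc q (i + 1) / (qPoch q q (i + 1)) ^ 2 - Qc q i / (qPoch q q i) ^ 2‖ := by
  obtain ⟨CQ, hCQ⟩ := exists_norm_le (tendsto_Qc hq)
  obtain ⟨δE, hδE, hδEle⟩ := exists_pos_le_norm (tendsto_E hq) (EInf_ne hq) (E_ne hq)
  have hCQ0 : 0 ≤ CQ := le_trans (norm_nonneg _) (hCQ 0)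
  apply summable_norm_of_geom_bound (C := ‖q‖ * CQ / δE ^ 2) (norm_nonneg q) hq
  intro i
  rw [← tele_v hq i, norm_div, norm_mul, norm_pow, norm_pow]
  calc ‖q‖ ^ (i + 1) * ‖Qc q i‖ / ‖qPoch q q (i + 1)‖ ^ 2
      ≤ ‖q‖ ^ (i + 1) * CQ / δE ^ 2 := by
        apply div_le_div₀ (by positivity) ?_ (by positivity) ?_
        · have := hCQ i
          nlinarith [pow_nonneg (norm_nonneg q) (i + 1), norm_nonneg (Qc q i)]
        · exact pow_le_pow_left₀ hδE.le (hδEle (i + 1)) 2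
    _ = ‖q‖ * CQ / δE ^ 2 * ‖q‖ ^ i := by rw [pow_succ]; ring

lemma outer_summable_w : Summable fun i =>
    ‖Pc q (i + 1) / (qPoch q q (i + 1)) ^ 2 - Pc q i / (qPoch q q i) ^ 2‖ := by
  obtain ⟨CP, hCP⟩ := exists_norm_le (tendsto_Pc hq)
  obtain ⟨δE, hδE, hδEle⟩ := exists_pos_le_norm (tendsto_E hq) (EInf_ne hq) (E_ne hq)
  have hCP0 : 0 ≤ CP := le_trans (norm_nonneg _) (hCP 0)
  apply summable_norm_of_geom_bound (C := 3 * (‖q‖ * CP / δE ^ 2)) (norm_nonneg q) hq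
  intro i
  have hw' : Pc q (i + 1) / qPoch q q (i + 1) ^ 2 - Pc q i / qPoch q q i ^ 2
      = 3 * (q ^ (i + 1) * Pc q i / (qPoch q q (i + 1)) ^ 2) := by
    rw [tele_w hq i]; ring
  rw [hw', norm_mul, norm_div, norm_mul, norm_pow, norm_pow]
  have h3 : ‖(3 : ℂ)‖ = 3 := by simp
  rw [h3]
  have hstep : ‖q‖ ^ (i + 1) * ‖Pc q i‖ / ‖qPoch q q (i + 1)‖ ^ 2
      ≤ ‖q‖ * CP / δE ^ 2 * ‖q‖ ^ i := by
    calc ‖q‖ ^ (i + 1) * ‖Pc q i‖ / ‖qPoch q q (i + 1)‖ ^ 2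
        ≤ ‖q‖ ^ (i + 1) * CP / δE ^ 2 := by
          apply div_le_div₀ (by positivity) ?_ (by positivity) ?_
          · have := hCP i
            nlinarith [pow_nonneg (norm_nonneg q) (i + 1), norm_nonneg (Pc q i)]
          · exact pow_le_pow_left₀ hδE.le (hδEle (i + 1)) 2
      _ = ‖q‖ * CP / δE ^ 2 * ‖q‖ ^ i := by rw [pow_succ]; ring
  calc 3 * (‖q‖ ^ (i + 1) * ‖Pc q i‖ / ‖qPoch q q (i + 1)‖ ^ 2)
      ≤ 3 * (‖q‖ * CP / δE ^ 2 * ‖q‖ ^ i) := by linarith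
    _ = 3 * (‖q‖ * CP / δE ^ 2) * ‖q‖ ^ i := by ring

lemma main_value :
    ∑' p : ℕ × ℕ, G q p
    = PcInf q / QcInf q / 2 * (QcInf q / (qPochInf q q) ^ 2 - 1)
      - 1 / 6 * (PcInf q / (qPochInf q q) ^ 2 - 1) := by
  rw [Summable.tsum_prod (summable_G hq)]
  have hout : (fun i => ∑' n, G q (i, n))
      = fun i => PcInf q / QcInf q / 2 *
        (Qc q (i + 1) / (qPoch q q (i + 1)) ^ 2 - Qc q i / (qPoch q q i) ^ 2)
      - 1 / 6 *
        (Pc q (i + 1) / (qPoch q q (i + 1)) ^ 2 - Pc q i / (qPoch q q i) ^ 2) := by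
    funext i
    rw [(inner_hasSum hq i).tsum_eq, outer_value hq i]
  rw [hout]
  have hvt : Tendsto (fun i => Qc q i / (qPoch q q i) ^ 2) atTop
      (𝓝 (QcInf q / (qPochInf q q) ^ 2)) :=
    (tendsto_Qc hq).div ((tendsto_E hq).pow 2) (pow_ne_zero 2 (EInf_ne hq))
  have hwt : Tendsto (fun i => Pc q i / (qPoch q q i) ^ 2) atTop
      (𝓝 (PcInf q / (qPochInf q q) ^ 2)) :=
    (tendsto_Pc hq).div ((tendsto_E hq).pow 2) (pow_ne_zero 2 (EInf_ne hq))
  have h1 := hasSum_telescope hvt (outer_summable_v hq)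
  have h2 := hasSum_telescope hwt (outer_summable_w hq)
  have hv0 : Qc q 0 / (qPoch q q 0) ^ 2 = 1 := by simp [Qc, qPoch]
  have hw0 : Pc q 0 / (qPoch q q 0) ^ 2 = 1 := by simp [Pc, qPoch]
  rw [hv0] at h1
  rw [hw0] at h2
  have htot := (h1.mul_left (PcInf q / QcInf q / 2)).sub (h2.mul_left (1 / 6))
  rw [htot.tsum_eq]

end withq

end DS1aux

open DS1aux in
/- The double sum is over `m ≥ 1, n ≥ 0`, encoded by `m = p.1 + 1`, `n = p.2`. -/
theorem thmDS1_b (q : ℂ) (hq : ‖q‖ < 1) :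
    ∑' p : ℕ × ℕ,
      q ^ (2 * (p.1 + 1) + p.2) * qPoch (q ^ 3) (-q ^ 3) p.1 *
        qPoch q (-q) (p.1 + 1 + p.2) * qPoch (q ^ 3) (q ^ 3) (p.1 + p.2) /
      (qPoch q (-q) p.1 * (qPoch q q (p.1 + 1)) ^ 2 * qPoch q q (p.1 + p.2) *
        qPoch (q ^ 3) (-q ^ 3) (p.1 + 1 + p.2))
    = (1 / 3) * qPochInf (q ^ 3) (q ^ 3) / (qPochInf q q) ^ 3
      - (1 / 2) * (qPochInf (q ^ 3) (q ^ 3) * qPochInf q (-q)) /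
          (qPochInf (q ^ 3) (-q ^ 3) * qPochInf q q)
      + 1 / 6 := by
  have hqn : ‖q‖ < 1 := hq
  have hstep1 : (∑' p : ℕ × ℕ,
      q ^ (2 * (p.1 + 1) + p.2) * qPoch (q ^ 3) (-q ^ 3) p.1 *
        qPoch q (-q) (p.1 + 1 + p.2) * qPoch (q ^ 3) (q ^ 3) (p.1 + p.2) /
      (qPoch q (-q) p.1 * (qPoch q q (p.1 + 1)) ^ 2 * qPoch q q (p.1 + p.2) *
        qPoch (q ^ 3) (-q ^ 3) (p.1 + 1 + p.2)))
      = ∑' p : ℕ × ℕ, G q p := tsum_congr (fun p => summand_eq hqn p)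
  rw [hstep1, main_value hqn, splitInf_P hqn, splitInf_Q hqn]
  have hE := EInf_ne hqn
  have hM := MInf_ne hqn
  have hQ := QcInf_ne hqn
  have e1 : qPochInf q q * PcInf q / (qPochInf q q) ^ 3 = PcInf q / (qPochInf q q) ^ 2 := by
    have h3 : (qPochInf q q) ^ 3 = qPochInf q q * (qPochInf q q) ^ 2 := by ring
    rw [h3, mul_div_mul_left _ _ hE]
  have e2 : qPochInf q q * PcInf q * qPochInf q (-q) /
      (qPochInf q (-q) * QcInf q * qPochInf q q) = PcInf q / QcInf q := by
    rw [div_eq_div_iff (mul_ne_zero (mul_ne_zero hM hQ) hE) hQ]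
    ring
  rw [mul_div_assoc, e1, mul_div_assoc, e2]
  have hE2 : (qPochInf q q) ^ 2 ≠ 0 := pow_ne_zero 2 hE
  field_simp [hE2, hQ]
  ring
end
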